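/- arXiv:1103.2261 — 4 statements merged into one kernel-verified Lean document; each statement's English description precedes it below -/
import Mathlib

section
/- Let H be a monoidal prebialgebra (satisfying (lm) and (rm)). Then the map ε̄_s restricts to an anti-algebra isomorphism H_t → H̄_s with inverse the restriction of ε_t, where ε_t(h)=ε(1₍₁₎h)1₍₂₎, ε̄_s(h)=ε(1₍₂₎h)1₍₁₎, H_t = Im(ε_t), H̄_s = Im(ε̄_s). In particular ε_t(y)ε_t(y') = ε_t(y'y) for all y,y' ∈ H̄_s. -/
open TensorProduct Coalgebra

section Prebialgebra

variable (R H : Type) [CommRing R] [Ring H] [Algebra R H] [Coalgebra R H]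

/-- The target map `ε_t(h) = ε(1₍₁₎h)1₍₂₎`. -/
noncomputable def epsT : H →ₗ[R] H :=
  (TensorProduct.lid R H).toLinearMap ∘ₗ
    TensorProduct.map Coalgebra.counit LinearMap.id ∘ₗ
    LinearMap.mulLeft R (Coalgebra.comul (R := R) (1 : H)) ∘ₗ
    Algebra.TensorProduct.includeLeft.toLinearMap

/-- The source map `ε_s(h) = ε(h1₍₂₎)1₍₁₎`. -/
noncomputable def epsS : H →ₗ[R] H :=
  (TensorProduct.rid R H).toLinearMap ∘ₗ
    TensorProduct.map LinearMap.id Coalgebra.counit ∘ₗ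
    LinearMap.mulRight R (Coalgebra.comul (R := R) (1 : H)) ∘ₗ
    Algebra.TensorProduct.includeRight.toLinearMap

/-- The map `ε̄_s(h) = ε(1₍₂₎h)1₍₁₎`. -/
noncomputable def epsSbar : H →ₗ[R] H :=
  (TensorProduct.rid R H).toLinearMap ∘ₗ
    TensorProduct.map LinearMap.id Coalgebra.counit ∘ₗ
    LinearMap.mulLeft R (Coalgebra.comul (R := R) (1 : H)) ∘ₗ
    Algebra.TensorProduct.includeRight.toLinearMap

/-- The map `ε̄_t(h) = ε(h1₍₁₎)1₍₂₎`. -/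
noncomputable def epsTbar : H →ₗ[R] H :=
  (TensorProduct.lid R H).toLinearMap ∘ₗ
    TensorProduct.map Coalgebra.counit LinearMap.id ∘ₗ
    LinearMap.mulRight R (Coalgebra.comul (R := R) (1 : H)) ∘ₗ
    Algebra.TensorProduct.includeLeft.toLinearMap

/-- The prebialgebra axiom: the comultiplication is multiplicative, `Δ(hk) = Δ(h)Δ(k)`. -/
def ComulMul : Prop :=
  ∀ a b : H,
    Coalgebra.comul (R := R) (a * b) = Coalgebra.comul (R := R) a * Coalgebra.comul (R := R) b

/-- Axiom (lm): `ε(hkl) = ε(hk₍₁₎)ε(k₍₂₎l)` for all `h,k,l`. -/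
noncomputable def LM : Prop :=
  ∀ h k l : H,
    Coalgebra.counit (R := R) (h * k * l) =
      LinearMap.mul' R R
        (TensorProduct.map (Coalgebra.counit ∘ₗ LinearMap.mulLeft R h)
          (Coalgebra.counit ∘ₗ LinearMap.mulRight R l) (Coalgebra.comul k))

/-- Axiom (rm): `ε(hkl) = ε(hk₍₂₎)ε(k₍₁₎l)` for all `h,k,l`. -/
noncomputable def RM : Prop :=
  ∀ h k l : H,
    Coalgebra.counit (R := R) (h * k * l) =
      LinearMap.mul' R R
        (TensorProduct.map (Coalgebra.counit ∘ₗ LinearMap.mulRight R l)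
          (Coalgebra.counit ∘ₗ LinearMap.mulLeft R h) (Coalgebra.comul k))

/-- `Δ²(1) = (id ⊗ Δ)(Δ(1))`, an element of `H ⊗ (H ⊗ H)`. -/
noncomputable def comulSq1 : H ⊗[R] (H ⊗[R] H) :=
  (TensorProduct.map LinearMap.id Coalgebra.comul) (Coalgebra.comul (R := R) (1 : H))

/-- `1₍₁₎ ⊗ 1₍₂₎ ⊗ 1`, an element of `H ⊗ (H ⊗ H)`. -/
noncomputable def d1Left : H ⊗[R] (H ⊗[R] H) :=
  (TensorProduct.map LinearMap.id Algebra.TensorProduct.includeLeft.toLinearMap)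
    (Coalgebra.comul (R := R) (1 : H))

/-- `1 ⊗ 1₍₁₎ ⊗ 1₍₂₎`, an element of `H ⊗ (H ⊗ H)`. -/
noncomputable def d1Right : H ⊗[R] (H ⊗[R] H) :=
  (1 : H) ⊗ₜ[R] (Coalgebra.comul (R := R) (1 : H))

/-- Axiom (lc): `Δ²(1) = 1₍₁₎ ⊗ 1₍₂₎1₍₁'₎ ⊗ 1₍₂'₎`. -/
noncomputable def LC : Prop := comulSq1 R H = d1Left R H * d1Right R H

/-- Axiom (rc): `Δ²(1) = 1₍₁₎ ⊗ 1₍₁'₎1₍₂₎ ⊗ 1₍₂'₎`. -/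
noncomputable def RC : Prop := comulSq1 R H = d1Right R H * d1Left R H

/-- The map `g : H → H*`, `⟨g(h), k⟩ = ε(kh)`. -/
noncomputable def gmap : H →ₗ[R] (H →ₗ[R] R) :=
  LinearMap.llcomp R H H R (Coalgebra.counit (R := R)) ∘ₗ (LinearMap.mul R H).flip

/-- The map `g' : H → H*`, `⟨g'(h), k⟩ = ε(hk)`. -/
noncomputable def gmap' : H →ₗ[R] (H →ₗ[R] R) :=
  LinearMap.llcomp R H H R (Coalgebra.counit (R := R)) ∘ₗ LinearMap.mul R H

/-- The map `f : H* → H`, `f(h*) = ⟨h*,1₍₁₎⟩1₍₂₎`. -/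
noncomputable def fmap (φ : H →ₗ[R] R) : H :=
  (TensorProduct.lid R H)
    ((TensorProduct.map φ LinearMap.id) (Coalgebra.comul (R := R) (1 : H)))

end Prebialgebra

/-! ### Auxiliary development -/

namespace PrebAux

set_option linter.unusedSectionVars false
set_option synthInstance.maxHeartbeats 400000
set_option maxHeartbeats 1000000

variable {R H : Type} [CommRing R] [Ring H] [Algebra R H] [Coalgebra R H]

local notation "ε" => Coalgebra.counit (R := R) (A := H)
local notation "Δ" => Coalgebra.comul (R := R) (A := H)
local notation "δ" => Coalgebra.comul (R := R) (1 : H)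

/-- scalar contraction `x ⊗ y ↦ φ x * ψ y` -/
noncomputable def c2 (φ ψ : H →ₗ[R] R) : H ⊗[R] H →ₗ[R] R :=
  TensorProduct.lift ((LinearMap.mul R R).compl₁₂ φ ψ)

@[simp] lemma c2_tmul (φ ψ : H →ₗ[R] R) (x y : H) :
    c2 φ ψ (x ⊗ₜ[R] y) = φ x * ψ y := rfl

/-- left contraction `x ⊗ m ↦ φ x • m` -/
noncomputable def ctl {M : Type} [AddCommGroup M] [Module R M] (φ : H →ₗ[R] R) :
    H ⊗[R] M →ₗ[R] M :=
  (TensorProduct.lid R M).toLinearMap ∘ₗ TensorProduct.map φ LinearMap.id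

@[simp] lemma ctl_tmul {M : Type} [AddCommGroup M] [Module R M] (φ : H →ₗ[R] R)
    (x : H) (m : M) : ctl φ (x ⊗ₜ[R] m) = φ x • m := rfl

/-- right contraction `m ⊗ y ↦ φ y • m` -/
noncomputable def ctr {M : Type} [AddCommGroup M] [Module R M] (φ : H →ₗ[R] R) :
    M ⊗[R] H →ₗ[R] M :=
  (TensorProduct.rid R M).toLinearMap ∘ₗ TensorProduct.map LinearMap.id φ

@[simp] lemma ctr_tmul {M : Type} [AddCommGroup M] [Module R M] (φ : H →ₗ[R] R)
    (m : M) (y : H) : ctr φ (m ⊗ₜ[R] y) = φ y • m := by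
  simp [ctr, TensorProduct.rid_tmul]

/-- `(s ⊗ G) ↦ η s • G` -/
noncomputable def ctl2 (η : H ⊗[R] H →ₗ[R] R) : (H ⊗[R] H) ⊗[R] H →ₗ[R] H :=
  (TensorProduct.lid R H).toLinearMap ∘ₗ TensorProduct.map η LinearMap.id

@[simp] lemma ctl2_tmul (η : H ⊗[R] H →ₗ[R] R) (s : H ⊗[R] H) (y : H) :
    ctl2 η (s ⊗ₜ[R] y) = η s • y := rfl

/-- `(E ⊗ s) ↦ η s • E` -/
noncomputable def ctr2 (η : H ⊗[R] H →ₗ[R] R) : H ⊗[R] (H ⊗[R] H) →ₗ[R] H :=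
  (TensorProduct.rid R H).toLinearMap ∘ₗ TensorProduct.map LinearMap.id η

@[simp] lemma ctr2_tmul (η : H ⊗[R] H →ₗ[R] R) (x : H) (s : H ⊗[R] H) :
    ctr2 η (x ⊗ₜ[R] s) = η s • x := by
  simp [ctr2, TensorProduct.rid_tmul]

@[simp] lemma gmap_apply (c u : H) : gmap R H c u = ε (u * c) := rfl

@[simp] lemma gmap'_apply (h u : H) : gmap' R H h u = ε (h * u) := rfl

lemma mul'_map (φ ψ : H →ₗ[R] R) (t : H ⊗[R] H) :
    LinearMap.mul' R R (TensorProduct.map φ ψ t) = c2 φ ψ t := by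
  induction t using TensorProduct.induction_on with
  | zero => simp
  | tmul x y => simp
  | add s t hs ht => simp [map_add, hs, ht]

/-- (rm) in contraction form. -/
lemma RM' (hrm : RM R H) (h k l : H) :
    ε (h * k * l) = c2 (gmap R H l) (gmap' R H h) (Δ k) := by
  rw [hrm h k l, ← mul'_map]; congr 1

/-- (lm) in contraction form. -/
lemma LM' (hlm : LM R H) (h k l : H) :
    ε (h * k * l) = c2 (gmap' R H h) (gmap R H l) (Δ k) := by
  rw [hlm h k l, ← mul'_map]; congr 1

lemma epsT_eq (h : H) : epsT R H h = ctl (gmap R H h) δ := by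
  have key : ∀ t : H ⊗[R] H,
      (TensorProduct.lid R H) (TensorProduct.map ε LinearMap.id (t * (h ⊗ₜ[R] 1)))
        = ctl (gmap R H h) t := by
    intro t
    induction t using TensorProduct.induction_on with
    | zero => simp
    | tmul x y => simp [Algebra.TensorProduct.tmul_mul_tmul]
    | add s t hs ht => simp [add_mul, hs, ht]
  simpa [epsT] using key δ

lemma epsSbar_eq (h : H) : epsSbar R H h = ctr (gmap R H h) δ := by
  have key : ∀ t : H ⊗[R] H,
      (TensorProduct.rid R H) (TensorProduct.map LinearMap.id ε (t * ((1:H) ⊗ₜ[R] h)))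
        = ctr (gmap R H h) t := by
    intro t
    induction t using TensorProduct.induction_on with
    | zero => simp
    | tmul x y => simp [Algebra.TensorProduct.tmul_mul_tmul, TensorProduct.rid_tmul]
    | add s t hs ht => simp [add_mul, hs, ht]
  simpa [epsSbar] using key δ

/-- left counit law. -/
lemma B1 (x : H) : ctl (R := R) (ε) (Δ x) = x := by
  have h := Coalgebra.rTensor_counit_comul (R := R) x
  have e : ctl (R := R) (ε) (Δ x)
      = (TensorProduct.lid R H) ((LinearMap.rTensor H ε) (Δ x)) := rfl
  rw [e, h]; simp

/-- right counit law. -/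
lemma B2 (x : H) : ctr (R := R) (ε) (Δ x) = x := by
  have h := Coalgebra.lTensor_counit_comul (R := R) x
  have e : ctr (R := R) (ε) (Δ x)
      = (TensorProduct.rid R H) ((LinearMap.lTensor H ε) (Δ x)) := rfl
  rw [e, h]; simp

lemma counit_mul_ctl (u : H) (φ : H →ₗ[R] R) (t : H ⊗[R] H) :
    ε (u * ctl φ t) = c2 φ (gmap' R H u) t := by
  induction t using TensorProduct.induction_on with
  | zero => simp
  | tmul x y => simp [mul_smul_comm]
  | add s t hs ht => simp [mul_add, hs, ht]

lemma counit_mul_ctr (u : H) (φ : H →ₗ[R] R) (t : H ⊗[R] H) :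
    ε (u * ctr φ t) = c2 (gmap' R H u) φ t := by
  induction t using TensorProduct.induction_on with
  | zero => simp
  | tmul x y => simp [mul_smul_comm, mul_comm]
  | add s t hs ht => simp [mul_add, hs, ht]

/-- `ε(u·ε_t(h)) = ε(u·h)` as functionals:  `g(ε_t h) = g h`. -/
lemma FEQt (hrm : RM R H) (h : H) : gmap R H (epsT R H h) = gmap R H h := by
  ext u
  have : ε (u * epsT R H h) = c2 (gmap R H h) (gmap' R H u) δ := by
    rw [epsT_eq]; exact counit_mul_ctl u _ δ
  have h2 := RM' hrm u 1 h
  simp only [mul_one] at h2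
  simp [this, ← h2]

/-- `g(ε̄_s h) = g h`. -/
lemma FEQs (hlm : LM R H) (h : H) : gmap R H (epsSbar R H h) = gmap R H h := by
  ext u
  have : ε (u * epsSbar R H h) = c2 (gmap' R H u) (gmap R H h) δ := by
    rw [epsSbar_eq]; exact counit_mul_ctr u _ δ
  have h2 := LM' hlm u 1 h
  simp only [mul_one] at h2
  simp [this, ← h2]

lemma comul_ctl (φ : H →ₗ[R] R) (t : H ⊗[R] H) :
    Δ (ctl φ t) = ctl φ ((LinearMap.lTensor H (Coalgebra.comul (R := R))) t) := by
  induction t using TensorProduct.induction_on with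
  | zero => simp
  | tmul x y => simp
  | add s t hs ht => simp [map_add, hs, ht]

lemma comul_ctr (φ : H →ₗ[R] R) (t : H ⊗[R] H) :
    Δ (ctr φ t) = ctr φ ((LinearMap.rTensor H (Coalgebra.comul (R := R))) t) := by
  induction t using TensorProduct.induction_on with
  | zero => simp
  | tmul x y => simp
  | add s t hs ht => simp [map_add, hs, ht]

lemma ctl_assoc (φ : H →ₗ[R] R) (s : H ⊗[R] H) (y : H) :
    ctl (R := R) φ ((TensorProduct.assoc R H H H) (s ⊗ₜ[R] y))
      = (ctl φ s) ⊗ₜ[R] y := by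
  induction s using TensorProduct.induction_on with
  | zero => rw [zero_tmul]; simp
  | tmul x₁ x₂ => simp [smul_tmul']
  | add s t hs ht => simp [add_tmul, map_add, hs, ht]

lemma ctr_assoc_symm (φ : H →ₗ[R] R) (x : H) (s : H ⊗[R] H) :
    ctr (R := R) φ ((TensorProduct.assoc R H H H).symm (x ⊗ₜ[R] s))
      = x ⊗ₜ[R] (ctr φ s) := by
  induction s using TensorProduct.induction_on with
  | zero => rw [tmul_zero]; simp
  | tmul y₁ y₂ => simp [tmul_smul]
  | add s t hs ht => simp [tmul_add, map_add, hs, ht]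

lemma counit_ctl_mul (d : H) (t : H ⊗[R] H) :
    ε (ctl (R := R) (ε) t * d) = c2 (ε) (gmap R H d) t := by
  induction t using TensorProduct.induction_on with
  | zero => simp
  | tmul x y => simp [smul_mul_assoc]
  | add s t hs ht => simp [add_mul, hs, ht]

/-- counit trick: `ε(W d) = Σ ε(W₍₁₎) ε(W₍₂₎ d)`. -/
lemma CT (W d : H) : ε (W * d) = c2 (ε) (gmap R H d) (Δ W) := by
  conv_lhs => rw [show W = ctl (R := R) (ε) (Δ W) from (B1 W).symm]
  exact counit_ctl_mul d (Δ W)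

lemma c2_mul_tmul (φ ψ : H →ₗ[R] R) (ν : H ⊗[R] H) (w y : H) :
    c2 φ ψ (ν * (w ⊗ₜ[R] y))
      = c2 (φ ∘ₗ LinearMap.mulRight R w) (ψ ∘ₗ LinearMap.mulRight R y) ν := by
  induction ν using TensorProduct.induction_on with
  | zero => simp
  | tmul p q => simp [Algebra.TensorProduct.tmul_mul_tmul]
  | add s t hs ht => simp [add_mul, hs, ht]

lemma eps_mulRight_ctl (hrm : RM R H) (c x : H) :
    (ε) ∘ₗ LinearMap.mulRight R (ctl (gmap R H c) (Δ x))
      = gmap R H c ∘ₗ LinearMap.mulRight R x := by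
  ext p
  have h1 : ε (p * ctl (gmap R H c) (Δ x)) = c2 (gmap R H c) (gmap' R H p) (Δ x) :=
    counit_mul_ctl p _ _
  have h2 := RM' hrm p x c
  simpa [h1] using h2.symm

/-- main induction step for (GG). -/
lemma GGstep (hrm : RM R H) (u c d : H) (t : H ⊗[R] H) :
    c2 (ε) (gmap R H d)
        (Δ u * ctl (gmap R H c)
          ((TensorProduct.assoc R H H H)
            ((LinearMap.rTensor H (Coalgebra.comul (R := R))) t)))
      = c2 (gmap R H c) (gmap R H d) (Δ u * t) := by
  induction t using TensorProduct.induction_on with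
  | zero => simp
  | tmul x y =>
      rw [LinearMap.rTensor_tmul, ctl_assoc, c2_mul_tmul, c2_mul_tmul,
        eps_mulRight_ctl hrm c x]
  | add s t hs ht => simp only [map_add, mul_add, hs, ht]

/-- Identity (GG): `ε(u ε_t(c) d) = Σ ε(u₍₁₎c) ε(u₍₂₎d)`. -/
lemma GG (hpre : ComulMul R H) (hrm : RM R H) (u c d : H) :
    ε (u * epsT R H c * d) = c2 (gmap R H c) (gmap R H d) (Δ u) := by
  rw [CT (u * epsT R H c) d, hpre u (epsT R H c), epsT_eq, comul_ctl,
    ← Coalgebra.coassoc_apply (1 : H), GGstep hrm u c d, ← hpre u 1, mul_one]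

lemma ST1 (hrm : RM R H) (d : H) (w t : H ⊗[R] H) :
    ctl (R := R) (ε)
        (w * ctl (gmap R H d)
          ((TensorProduct.assoc R H H H)
            ((LinearMap.rTensor H (Coalgebra.comul (R := R))) t)))
      = ctl (gmap R H d) (w * t) := by
  induction t using TensorProduct.induction_on with
  | zero => simp
  | tmul x y =>
      rw [LinearMap.rTensor_tmul, ctl_assoc]
      induction w using TensorProduct.induction_on with
      | zero => simp
      | tmul F G =>
          rw [Algebra.TensorProduct.tmul_mul_tmul, Algebra.TensorProduct.tmul_mul_tmul,
            ctl_tmul, ctl_tmul]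
          have h1 : ε (F * ctl (gmap R H d) (Δ x)) = c2 (gmap R H d) (gmap' R H F) (Δ x) :=
            counit_mul_ctl F _ _
          have h2 := RM' hrm F x d
          rw [h1, ← h2]
          simp
      | add s t hs ht => simp only [add_mul, map_add, hs, ht]
  | add s t hs ht => simp only [map_add, mul_add, hs, ht]

lemma ctl_mul_right (φ : H →ₗ[R] R) (s : H ⊗[R] (H ⊗[R] H)) (t : H ⊗[R] H) :
    (ctl φ s) * t = ctl φ ((LinearMap.lTensor H (LinearMap.mulRight R t)) s) := by
  induction s using TensorProduct.induction_on with
  | zero => simp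
  | tmul E w => simp [smul_mul_assoc]
  | add s t hs ht => simp [add_mul, map_add, hs, ht]

lemma ctl_ctl (ψ φ : H →ₗ[R] R) (s : H ⊗[R] (H ⊗[R] H)) :
    ctl ψ (ctl φ s) = ctl φ ((LinearMap.lTensor H (ctl ψ)) s) := by
  induction s using TensorProduct.induction_on with
  | zero => simp
  | tmul E w => simp
  | add s t hs ht => simp [map_add, hs, ht]

/-- Identity (★): `ε_t(c) ε_t(d) = Σ ε(1₍₁₎c) ε(1₍₂₎d) 1₍₃₎`. -/
lemma STAR (hpre : ComulMul R H) (hrm : RM R H) (c d : H) :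
    epsT R H c * epsT R H d
      = ctl (gmap R H c)
          ((LinearMap.lTensor H (ctl (gmap R H d)))
            ((LinearMap.lTensor H (Coalgebra.comul (R := R))) δ)) := by
  have e0 : epsT R H c * epsT R H d
      = ctl (R := R) (ε) (Δ (epsT R H c) * Δ (epsT R H d)) := by
    rw [← hpre, B1]
  have e1 : Δ (epsT R H d)
      = ctl (gmap R H d)
          ((TensorProduct.assoc R H H H)
            ((LinearMap.rTensor H (Coalgebra.comul (R := R))) δ)) := by
    rw [epsT_eq, comul_ctl, Coalgebra.coassoc_apply]
  rw [e0, e1, ST1 hrm d _ δ, epsT_eq, comul_ctl, ctl_mul_right, ctl_ctl,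
    ← LinearMap.lTensor_comp_apply, ← LinearMap.lTensor_comp_apply]
  have e2 : ((ctl (gmap R H d)) ∘ₗ (LinearMap.mulRight R (δ : H ⊗[R] H)))
        ∘ₗ (Coalgebra.comul (R := R) (A := H))
      = (ctl (gmap R H d)) ∘ₗ (Coalgebra.comul (R := R) (A := H)) := by
    ext x
    simp only [LinearMap.comp_apply, LinearMap.mulRight_apply]
    rw [← hpre x 1, mul_one]
  rw [e2, LinearMap.lTensor_comp_apply]

lemma gmap_epsT_mul (hpre : ComulMul R H) (hrm : RM R H) (c d : H) :
    gmap R H (epsT R H c * d)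
      = (c2 (gmap R H c) (gmap R H d)) ∘ₗ (Coalgebra.comul (R := R) (A := H)) := by
  ext u
  simp only [gmap_apply, LinearMap.comp_apply]
  rw [← mul_assoc]
  exact GG hpre hrm u c d

lemma ctl_comp_comul (η : H ⊗[R] H →ₗ[R] R) (t : H ⊗[R] H) :
    ctl (η ∘ₗ (Coalgebra.comul (R := R) (A := H))) t
      = ctl2 η ((LinearMap.rTensor H (Coalgebra.comul (R := R))) t) := by
  induction t using TensorProduct.induction_on with
  | zero => simp
  | tmul x y => simp
  | add s t hs ht => simp [map_add, hs, ht]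

lemma ctl2_c2 (φ ψ : H →ₗ[R] R) (t : (H ⊗[R] H) ⊗[R] H) :
    ctl2 (c2 φ ψ) t
      = ctl φ ((LinearMap.lTensor H (ctl ψ)) ((TensorProduct.assoc R H H H) t)) := by
  induction t using TensorProduct.induction_on with
  | zero => simp
  | tmul s G =>
      induction s using TensorProduct.induction_on with
      | zero => rw [zero_tmul]; simp
      | tmul x y =>
          rw [TensorProduct.assoc_tmul, LinearMap.lTensor_tmul, ctl2_tmul, c2_tmul,
            ctl_tmul, ctl_tmul, smul_smul]
      | add s t hs ht => rw [add_tmul]; simp only [map_add, hs, ht]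
  | add s t hs ht => simp only [map_add, hs, ht]

/-- The crux: `ε_t(c) ε_t(d) = ε_t(ε_t(c) d)`. -/
lemma CRUX (hpre : ComulMul R H) (hrm : RM R H) (c d : H) :
    epsT R H c * epsT R H d = epsT R H (epsT R H c * d) := by
  rw [STAR hpre hrm c d, epsT_eq (epsT R H c * d), gmap_epsT_mul hpre hrm,
    ctl_comp_comul, ctl2_c2, Coalgebra.coassoc_apply]

lemma ST1' (hlm : LM R H) (c : H) (w t : H ⊗[R] H) :
    ctr (R := R) (ε)
        (w * ctr (gmap R H c)
          ((TensorProduct.assoc R H H H).symm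
            ((LinearMap.lTensor H (Coalgebra.comul (R := R))) t)))
      = ctr (gmap R H c) (w * t) := by
  induction t using TensorProduct.induction_on with
  | zero => simp
  | tmul x y =>
      rw [LinearMap.lTensor_tmul, ctr_assoc_symm]
      induction w using TensorProduct.induction_on with
      | zero => simp
      | tmul E F =>
          rw [Algebra.TensorProduct.tmul_mul_tmul, Algebra.TensorProduct.tmul_mul_tmul,
            ctr_tmul, ctr_tmul]
          have h1 : ε (F * ctr (gmap R H c) (Δ y)) = c2 (gmap' R H F) (gmap R H c) (Δ y) :=
            counit_mul_ctr F _ _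
          have h2 := LM' hlm F y c
          rw [h1, ← h2]
          simp
      | add s t hs ht => simp only [add_mul, map_add, hs, ht]
  | add s t hs ht => simp only [map_add, mul_add, hs, ht]

lemma ctr_mul_right (φ : H →ₗ[R] R) (s : (H ⊗[R] H) ⊗[R] H) (t : H ⊗[R] H) :
    (ctr φ s) * t = ctr φ ((LinearMap.rTensor H (LinearMap.mulRight R t)) s) := by
  induction s using TensorProduct.induction_on with
  | zero => simp
  | tmul w G => simp [smul_mul_assoc]
  | add s t hs ht => simp [add_mul, map_add, hs, ht]

lemma ctr_ctr (ψ φ : H →ₗ[R] R) (s : (H ⊗[R] H) ⊗[R] H) :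
    ctr ψ (ctr φ s) = ctr φ ((LinearMap.rTensor H (ctr ψ)) s) := by
  induction s using TensorProduct.induction_on with
  | zero => simp
  | tmul w G => simp
  | add s t hs ht => simp [map_add, hs, ht]

/-- Identity (★'): `ε̄_s(d) ε̄_s(c) = Σ ε(1₍₂₎c) ε(1₍₃₎d) 1₍₁₎`. -/
lemma STAR' (hpre : ComulMul R H) (hlm : LM R H) (c d : H) :
    epsSbar R H d * epsSbar R H c
      = ctr (gmap R H d)
          ((LinearMap.rTensor H (ctr (gmap R H c)))
            ((LinearMap.rTensor H (Coalgebra.comul (R := R))) δ)) := by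
  have e0 : epsSbar R H d * epsSbar R H c
      = ctr (R := R) (ε) (Δ (epsSbar R H d) * Δ (epsSbar R H c)) := by
    rw [← hpre, B2]
  have e1 : Δ (epsSbar R H c)
      = ctr (gmap R H c)
          ((TensorProduct.assoc R H H H).symm
            ((LinearMap.lTensor H (Coalgebra.comul (R := R))) δ)) := by
    rw [epsSbar_eq, comul_ctr, Coalgebra.coassoc_symm_apply]
  rw [e0, e1, ST1' hlm c _ δ, epsSbar_eq, comul_ctr, ctr_mul_right, ctr_ctr,
    ← LinearMap.rTensor_comp_apply, ← LinearMap.rTensor_comp_apply]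
  have e2 : ((ctr (gmap R H c)) ∘ₗ (LinearMap.mulRight R (δ : H ⊗[R] H)))
        ∘ₗ (Coalgebra.comul (R := R) (A := H))
      = (ctr (gmap R H c)) ∘ₗ (Coalgebra.comul (R := R) (A := H)) := by
    ext x
    simp only [LinearMap.comp_apply, LinearMap.mulRight_apply]
    rw [← hpre x 1, mul_one]
  rw [e2, LinearMap.rTensor_comp_apply]

lemma counit_mul_ctr_mul (u c : H) (φ : H →ₗ[R] R) (t : H ⊗[R] H) :
    ε (u * ctr φ t * c)
      = c2 ((ε) ∘ₗ LinearMap.mulRight R c ∘ₗ LinearMap.mulLeft R u) φ t := by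
  induction t using TensorProduct.induction_on with
  | zero => simp
  | tmul m y => simp [mul_smul_comm, smul_mul_assoc, mul_comm]
  | add s t hs ht => simp [mul_add, add_mul, hs, ht]

lemma counit_mul_ctl_mul (u d : H) (φ : H →ₗ[R] R) (t : H ⊗[R] H) :
    ε (u * ctl φ t * d)
      = c2 φ ((ε) ∘ₗ LinearMap.mulRight R d ∘ₗ LinearMap.mulLeft R u) t := by
  induction t using TensorProduct.induction_on with
  | zero => simp
  | tmul x y => simp [mul_smul_comm, smul_mul_assoc]
  | add s t hs ht => simp [mul_add, add_mul, hs, ht]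

noncomputable def c2' (η : H ⊗[R] H →ₗ[R] R) (ψ : H →ₗ[R] R) :
    (H ⊗[R] H) ⊗[R] H →ₗ[R] R :=
  TensorProduct.lift ((LinearMap.mul R R).compl₁₂ η ψ)

@[simp] lemma c2'_tmul (η : H ⊗[R] H →ₗ[R] R) (ψ : H →ₗ[R] R) (s : H ⊗[R] H) (y : H) :
    c2' η ψ (s ⊗ₜ[R] y) = η s * ψ y := rfl

noncomputable def c2l (φ : H →ₗ[R] R) (η : H ⊗[R] H →ₗ[R] R) :
    H ⊗[R] (H ⊗[R] H) →ₗ[R] R :=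
  TensorProduct.lift ((LinearMap.mul R R).compl₁₂ φ η)

@[simp] lemma c2l_tmul (φ : H →ₗ[R] R) (η : H ⊗[R] H →ₗ[R] R) (x : H) (s : H ⊗[R] H) :
    c2l φ η (x ⊗ₜ[R] s) = φ x * η s := rfl

lemma c2_comp_comul_left (η : H ⊗[R] H →ₗ[R] R) (ψ : H →ₗ[R] R) (t : H ⊗[R] H) :
    c2 (η ∘ₗ (Coalgebra.comul (R := R) (A := H))) ψ t
      = c2' η ψ ((LinearMap.rTensor H (Coalgebra.comul (R := R))) t) := by
  induction t using TensorProduct.induction_on with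
  | zero => simp
  | tmul x y => simp
  | add s t hs ht => simp [map_add, hs, ht]

lemma c2_comp_comul_right (φ : H →ₗ[R] R) (η : H ⊗[R] H →ₗ[R] R) (t : H ⊗[R] H) :
    c2 φ (η ∘ₗ (Coalgebra.comul (R := R) (A := H))) t
      = c2l φ η ((LinearMap.lTensor H (Coalgebra.comul (R := R))) t) := by
  induction t using TensorProduct.induction_on with
  | zero => simp
  | tmul x y => simp
  | add s t hs ht => simp [map_add, hs, ht]

lemma c2'_c2l (φ ψ' ψ : H →ₗ[R] R) (t : (H ⊗[R] H) ⊗[R] H) :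
    c2' (c2 φ ψ') ψ t = c2l φ (c2 ψ' ψ) ((TensorProduct.assoc R H H H) t) := by
  induction t using TensorProduct.induction_on with
  | zero => simp
  | tmul s G =>
      induction s using TensorProduct.induction_on with
      | zero => rw [zero_tmul]; simp
      | tmul E F => rw [TensorProduct.assoc_tmul, c2'_tmul, c2l_tmul, c2_tmul, c2_tmul,
          mul_assoc]
      | add s t hs ht =>
          rw [add_tmul]
          simp only [map_add, hs, ht]
  | add s t hs ht => simp only [map_add, hs, ht]

/-- Identity (SWAP): `ε(u ε̄_s(d) c) = ε(u ε_t(c) d)`. -/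
lemma SWAP (hlm : LM R H) (hrm : RM R H) (u c d : H) :
    ε (u * epsSbar R H d * c) = ε (u * epsT R H c * d) := by
  have l1 : ε (u * epsSbar R H d * c)
      = c2 ((ε) ∘ₗ LinearMap.mulRight R c ∘ₗ LinearMap.mulLeft R u) (gmap R H d) δ := by
    rw [epsSbar_eq]; exact counit_mul_ctr_mul u c _ δ
  have l2 : (ε) ∘ₗ LinearMap.mulRight R c ∘ₗ LinearMap.mulLeft R u
      = (c2 (gmap R H c) (gmap' R H u)) ∘ₗ (Coalgebra.comul (R := R) (A := H)) := by
    ext m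
    simp only [LinearMap.comp_apply, LinearMap.mulRight_apply, LinearMap.mulLeft_apply]
    exact RM' hrm u m c
  have r1 : ε (u * epsT R H c * d)
      = c2 (gmap R H c) ((ε) ∘ₗ LinearMap.mulRight R d ∘ₗ LinearMap.mulLeft R u) δ := by
    rw [epsT_eq]; exact counit_mul_ctl_mul u d _ δ
  have r2 : (ε) ∘ₗ LinearMap.mulRight R d ∘ₗ LinearMap.mulLeft R u
      = (c2 (gmap' R H u) (gmap R H d)) ∘ₗ (Coalgebra.comul (R := R) (A := H)) := by
    ext m
    simp only [LinearMap.comp_apply, LinearMap.mulRight_apply, LinearMap.mulLeft_apply]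
    exact LM' hlm u m d
  rw [l1, l2, r1, r2, c2_comp_comul_left, c2_comp_comul_right, c2'_c2l,
    Coalgebra.coassoc_apply]

lemma ctr_comp_comul (η : H ⊗[R] H →ₗ[R] R) (t : H ⊗[R] H) :
    ctr (η ∘ₗ (Coalgebra.comul (R := R) (A := H))) t
      = ctr2 η ((LinearMap.lTensor H (Coalgebra.comul (R := R))) t) := by
  induction t using TensorProduct.induction_on with
  | zero => simp
  | tmul x y => simp
  | add s t hs ht => simp [map_add, hs, ht]

lemma ctr2_c2 (φ ψ : H →ₗ[R] R) (t : (H ⊗[R] H) ⊗[R] H) :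
    ctr2 (c2 φ ψ) ((TensorProduct.assoc R H H H) t)
      = ctr ψ ((LinearMap.rTensor H (ctr φ)) t) := by
  induction t using TensorProduct.induction_on with
  | zero => simp
  | tmul s G =>
      induction s using TensorProduct.induction_on with
      | zero => rw [zero_tmul]; simp
      | tmul E F =>
          rw [TensorProduct.assoc_tmul, ctr2_tmul, c2_tmul, LinearMap.rTensor_tmul,
            ctr_tmul, ctr_tmul, smul_smul, mul_comm (φ F) (ψ G)]
      | add s t hs ht =>
          rw [add_tmul]
          simp only [map_add, hs, ht]
  | add s t hs ht => simp only [map_add, hs, ht]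

/-- `ε̄_s(ε_t(h) k) = ε̄_s(k) ε̄_s(h)`. -/
lemma claim4link (hpre : ComulMul R H) (hrm : RM R H) (hlm : LM R H) (h k : H) :
    epsSbar R H (epsT R H h * k) = epsSbar R H k * epsSbar R H h := by
  rw [epsSbar_eq, gmap_epsT_mul hpre hrm, ctr_comp_comul,
    ← Coalgebra.coassoc_apply (1 : H), ctr2_c2, ← STAR' hpre hlm h k]

/-- `ε_t(ε̄_s(d) c) = ε_t(c) ε_t(d)`. -/
lemma claim5link (hpre : ComulMul R H) (hlm : LM R H) (hrm : RM R H) (c d : H) :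
    epsT R H (epsSbar R H d * c) = epsT R H c * epsT R H d := by
  have g : gmap R H (epsSbar R H d * c)
      = (c2 (gmap R H c) (gmap R H d)) ∘ₗ (Coalgebra.comul (R := R) (A := H)) := by
    ext u
    simp only [gmap_apply, LinearMap.comp_apply]
    rw [← mul_assoc, SWAP hlm hrm u c d]
    exact GG hpre hrm u c d
  rw [epsT_eq, g, ctl_comp_comul, ctl2_c2, Coalgebra.coassoc_apply,
    ← STAR hpre hrm c d]

lemma epsSbar_epsT (hrm : RM R H) (k : H) :
    epsSbar R H (epsT R H k) = epsSbar R H k := by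
  rw [epsSbar_eq, FEQt hrm, ← epsSbar_eq]

lemma epsT_epsSbar (hlm : LM R H) (c : H) :
    epsT R H (epsSbar R H c) = epsT R H c := by
  rw [epsT_eq, FEQs hlm, ← epsT_eq]

end PrebAux

open PrebAux in
/-- In a monoidal prebialgebra, `ε̄_s` restricts to an anti-algebra
isomorphism `H_t → H̄_s` with inverse the restriction of `ε_t`; in particular
`ε_t(y)ε_t(y') = ε_t(y'y)` for all `y, y' ∈ H̄_s`. -/
theorem m_epsSbar_antiIso
    (R H : Type) [CommRing R] [Ring H] [Algebra R H] [Coalgebra R H]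
    (hpre : ComulMul R H) (hlm : LM R H) (hrm : RM R H) :
    (∀ z ∈ Set.range (epsT R H), epsT R H (epsSbar R H z) = z) ∧
    (∀ y ∈ Set.range (epsSbar R H), epsSbar R H (epsT R H y) = y) ∧
    (epsSbar R H (1 : H) = 1) ∧
    (∀ z ∈ Set.range (epsT R H), ∀ z' ∈ Set.range (epsT R H),
      epsSbar R H (z * z') = epsSbar R H z' * epsSbar R H z) ∧
    (∀ y ∈ Set.range (epsSbar R H), ∀ y' ∈ Set.range (epsSbar R H),
      epsT R H y * epsT R H y' = epsT R H (y' * y)) := by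
  refine ⟨?_, ?_, ?_, ?_, ?_⟩
  · rintro z ⟨h, rfl⟩
    rw [epsT_epsSbar hlm, epsT_eq (epsT R H h), FEQt hrm, ← epsT_eq]
  · rintro y ⟨h, rfl⟩
    rw [epsSbar_epsT hrm, epsSbar_eq (epsSbar R H h), FEQs hlm, ← epsSbar_eq]
  · have g1 : gmap R H (1 : H) = Coalgebra.counit (R := R) := by
      ext u; simp
    rw [epsSbar_eq, g1]
    exact B2 1
  · rintro z ⟨h, rfl⟩ z' ⟨k, rfl⟩
    have e : gmap R H (epsT R H h * epsT R H k) = gmap R H (epsT R H h * k) := by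
      ext u
      simp only [gmap_apply, ← mul_assoc]
      simpa using LinearMap.congr_fun (FEQt hrm k) (u * epsT R H h)
    rw [epsSbar_eq (epsT R H h * epsT R H k), e, ← epsSbar_eq,
      claim4link hpre hrm hlm h k, epsSbar_epsT hrm, epsSbar_epsT hrm]
  · rintro y ⟨c, rfl⟩ y' ⟨d, rfl⟩
    have e : gmap R H (epsSbar R H d * epsSbar R H c) = gmap R H (epsSbar R H d * c) := by
      ext u
      simp only [gmap_apply, ← mul_assoc]
      simpa using LinearMap.congr_fun (FEQs hlm c) (u * epsSbar R H d)
    rw [epsT_epsSbar hlm, epsT_epsSbar hlm,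
      epsT_eq (epsSbar R H d * epsSbar R H c), e, ← epsT_eq,
      claim5link hpre hlm hrm c d]
end

section
/- Let H be a monoidal prebialgebra (satisfying (lm) and (rm)). Then for all h,k ∈ H: ε̄_s(h)ε_t(k) = ε_t(k)ε̄_s(h), and 1₍₁₎ε̄_s(h) ⊗ 1₍₂₎ = 1₍₁₎ ⊗ 1₍₂₎ε_t(h), where ε_t(h)=ε(1₍₁₎h)1₍₂₎ and ε̄_s(h)=ε(1₍₂₎h)1₍₁₎. -/
open TensorProduct Coalgebra

section Aux
open LinearMap
set_option linter.unusedSectionVars false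
variable {R H : Type} [CommRing R] [Ring H] [Algebra R H] [Coalgebra R H]

noncomputable def gR (h : H) : H →ₗ[R] R := counit ∘ₗ mulRight R h

noncomputable def GLm (h : H) : H ⊗[R] H →ₗ[R] H :=
  (TensorProduct.rid R H).toLinearMap ∘ₗ TensorProduct.map LinearMap.id (gR h)

noncomputable def GRm (h : H) : H ⊗[R] H →ₗ[R] H :=
  (TensorProduct.lid R H).toLinearMap ∘ₗ TensorProduct.map (gR h) LinearMap.id

@[simp] lemma GLm_tmul (h a b : H) :
    GLm (R := R) h (a ⊗ₜ[R] b) = counit (R := R) (b * h) • a := by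
  simp [GLm, gR]

@[simp] lemma GRm_tmul (h a b : H) :
    GRm (R := R) h (a ⊗ₜ[R] b) = counit (R := R) (a * h) • b := by
  simp [GRm, gR]

example (Z : (H ⊗[R] H) ⊗[R] H) :
    (Algebra.TensorProduct.assoc R R R H H H) Z = (TensorProduct.assoc R H H H) Z := rfl

-- multiplication shape lemmas
lemma mul_one_tmul (a : H) (C : H ⊗[R] H) :
    C * ((1 : H) ⊗ₜ[R] a) = TensorProduct.map LinearMap.id (mulRight R a) C := by
  induction C using TensorProduct.induction_on with
  | zero => simp [zero_mul]
  | tmul u v => simp [Algebra.TensorProduct.tmul_mul_tmul]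
  | add x y hx hy => simp [add_mul, hx, hy]

lemma mul_tmul_one (a : H) (C : H ⊗[R] H) :
    C * (a ⊗ₜ[R] (1 : H)) = TensorProduct.map (mulRight R a) LinearMap.id C := by
  induction C using TensorProduct.induction_on with
  | zero => simp [zero_mul]
  | tmul u v => simp [Algebra.TensorProduct.tmul_mul_tmul]
  | add x y hx hy => simp [add_mul, hx, hy]

lemma one_tmul_mul (a : H) (C : H ⊗[R] H) :
    ((1 : H) ⊗ₜ[R] a) * C = TensorProduct.map LinearMap.id (mulLeft R a) C := by
  induction C using TensorProduct.induction_on with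
  | zero => simp [mul_zero]
  | tmul u v => simp [Algebra.TensorProduct.tmul_mul_tmul]
  | add x y hx hy => simp [mul_add, hx, hy]

lemma tmul_one_mul (a : H) (C : H ⊗[R] H) :
    (a ⊗ₜ[R] (1 : H)) * C = TensorProduct.map (mulLeft R a) LinearMap.id C := by
  induction C using TensorProduct.induction_on with
  | zero => simp [mul_zero]
  | tmul u v => simp [Algebra.TensorProduct.tmul_mul_tmul]
  | add x y hx hy => simp [mul_add, hx, hy]

-- counit collapse maps
noncomputable def epsL : H ⊗[R] H →ₗ[R] H :=
  (TensorProduct.lid R H).toLinearMap ∘ₗ TensorProduct.map counit LinearMap.id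

noncomputable def epsR : H ⊗[R] H →ₗ[R] H :=
  (TensorProduct.rid R H).toLinearMap ∘ₗ TensorProduct.map LinearMap.id counit

@[simp] lemma epsL_tmul (a b : H) : epsL (R := R) (a ⊗ₜ[R] b) = counit (R := R) a • b := by
  simp [epsL]

@[simp] lemma epsR_tmul (a b : H) : epsR (R := R) (a ⊗ₜ[R] b) = counit (R := R) b • a := by
  simp [epsR]

lemma epsL_comul (a : H) : epsL (R := R) (comul (R := R) a) = a := by
  have h := Coalgebra.rTensor_counit_comul (R := R) a
  have : epsL (R := R) (comul (R := R) a)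
      = (TensorProduct.lid R H) (counit.rTensor H (comul (R := R) a)) := rfl
  rw [this, h]; simp

lemma epsR_comul (a : H) : epsR (R := R) (comul (R := R) a) = a := by
  have h := Coalgebra.lTensor_counit_comul (R := R) a
  have : epsR (R := R) (comul (R := R) a)
      = (TensorProduct.rid R H) (counit.lTensor H (comul (R := R) a)) := rfl
  rw [this, h]; simp

-- identification of epsSbar/epsT with GLm/GRm applied to comul 1
lemma epsSbar_eq (h : H) :
    epsSbar R H h = GLm h (comul (R := R) (1 : H)) := by
  have key : ∀ C : H ⊗[R] H,
      (TensorProduct.rid R H) ((TensorProduct.map LinearMap.id counit)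
        (C * ((1:H) ⊗ₜ[R] h))) = GLm h C := by
    intro C
    rw [mul_one_tmul]
    induction C using TensorProduct.induction_on with
    | zero => simp
    | tmul u v => simp [gR]
    | add x y hx hy => simp_all
  have : epsSbar R H h = (TensorProduct.rid R H)
      ((TensorProduct.map LinearMap.id counit)
        ((comul (R := R) (1 : H)) * ((1:H) ⊗ₜ[R] h))) := by
    simp [epsSbar, mulLeft_apply]
  rw [this, key]

lemma epsT_eq (h : H) :
    epsT R H h = GRm h (comul (R := R) (1 : H)) := by
  have key : ∀ C : H ⊗[R] H,
      (TensorProduct.lid R H) ((TensorProduct.map counit LinearMap.id)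
        (C * (h ⊗ₜ[R] (1:H)))) = GRm h C := by
    intro C
    rw [mul_tmul_one]
    induction C using TensorProduct.induction_on with
    | zero => simp
    | tmul u v => simp [gR]
    | add x y hx hy => simp_all
  have : epsT R H h = (TensorProduct.lid R H)
      ((TensorProduct.map counit LinearMap.id)
        ((comul (R := R) (1 : H)) * (h ⊗ₜ[R] (1:H)))) := by
    simp [epsT, mulLeft_apply]
  rw [this, key]

lemma mul_GLm (h x : H) (C : H ⊗[R] H) :
    x * GLm h C = GLm h ((x ⊗ₜ[R] (1:H)) * C) := by
  rw [tmul_one_mul]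
  induction C using TensorProduct.induction_on with
  | zero => simp
  | tmul u v => simp [mul_smul_comm]
  | add a b ha hb => simp [mul_add, ha, hb]

lemma mul_GRm (h x : H) (C : H ⊗[R] H) :
    x * GRm h C = GRm h (((1:H) ⊗ₜ[R] x) * C) := by
  rw [one_tmul_mul]
  induction C using TensorProduct.induction_on with
  | zero => simp
  | tmul u v => simp [mul_smul_comm]
  | add a b ha hb => simp [mul_add, ha, hb]

-- the counit-collapse on the middle factor of H ⊗ (H ⊗ H)
noncomputable def Fc : H ⊗[R] (H ⊗[R] H) →ₗ[R] H ⊗[R] H :=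
  TensorProduct.map LinearMap.id epsL

noncomputable def FcL : (H ⊗[R] H) ⊗[R] H →ₗ[R] H ⊗[R] H :=
  TensorProduct.map epsR LinearMap.id

@[simp] lemma Fc_tmul (a : H) (Z : H ⊗[R] H) :
    Fc (R := R) (a ⊗ₜ[R] Z) = a ⊗ₜ[R] epsL (R := R) Z := by simp [Fc]

@[simp] lemma FcL_tmul (Z : H ⊗[R] H) (c : H) :
    FcL (R := R) (Z ⊗ₜ[R] c) = epsR (R := R) Z ⊗ₜ[R] c := by simp [FcL]

-- expansion of (x ⊗ 1) * B  via counit and multiplicativity of comul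
lemma expandL (hpre : ComulMul R H) (x : H) (B : H ⊗[R] H) :
    (x ⊗ₜ[R] (1:H)) * B
      = FcL ((comul (R := R) x ⊗ₜ[R] (1:H)) * (comul (R := R)).rTensor H B) := by
  induction B using TensorProduct.induction_on with
  | zero => simp [mul_zero]
  | tmul p q =>
      rw [rTensor_tmul]
      rw [Algebra.TensorProduct.tmul_mul_tmul, Algebra.TensorProduct.tmul_mul_tmul]
      rw [← hpre x p, FcL_tmul, epsR_comul]
  | add a b ha hb => simp only [mul_add, map_add, ha, hb]

lemma expandR (hpre : ComulMul R H) (x : H) (B : H ⊗[R] H) :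
    ((1:H) ⊗ₜ[R] x) * B
      = Fc (((1:H) ⊗ₜ[R] comul (R := R) x) * (comul (R := R)).lTensor H B) := by
  induction B using TensorProduct.induction_on with
  | zero => simp [mul_zero]
  | tmul p q =>
      rw [lTensor_tmul]
      rw [Algebra.TensorProduct.tmul_mul_tmul, Algebra.TensorProduct.tmul_mul_tmul]
      rw [← hpre x q, Fc_tmul, epsL_comul]
  | add a b ha hb => simp only [mul_add, map_add, ha, hb]

-- associator lemmas
lemma Lam_tmulX (X : H ⊗[R] H) (c : H) :
    (Algebra.TensorProduct.assoc R R R H H H) (X ⊗ₜ[R] c)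
      = TensorProduct.map LinearMap.id ((TensorProduct.mk R H H).flip c) X := by
  induction X using TensorProduct.induction_on with
  | zero => simp
  | tmul a b => simp
  | add a b ha hb => rw [add_tmul, map_add, ha, hb, map_add]

lemma Lam_one_tmul (C : H ⊗[R] H) :
    (Algebra.TensorProduct.assoc R R R H H H)
        (TensorProduct.map (TensorProduct.mk R H H (1:H)) LinearMap.id C)
      = (1:H) ⊗ₜ[R] C := by
  induction C using TensorProduct.induction_on with
  | zero => simp
  | tmul a b => simp
  | add a b ha hb => rw [map_add, map_add, ha, hb, tmul_add]

lemma Lam_coassoc (a : H) :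
    (Algebra.TensorProduct.assoc R R R H H H) ((comul (R := R)).rTensor H (comul a))
      = (comul (R := R)).lTensor H (comul (R := R) a) :=
  coassoc_apply a

lemma GLm_FcL_assoc (h : H) :
    (GLm (R := R) h) ∘ₗ FcL
      = GLm h ∘ₗ Fc ∘ₗ (Algebra.TensorProduct.assoc R R R H H H).toLinearMap := by
  apply TensorProduct.ext_threefold
  intro a b c
  simp [smul_smul, mul_comm]

-- scalar lemmas feeding (lm)/(rm)
lemma scalar_lm_aux (h b : H) (D : H ⊗[R] H) :
    counit (R := R) (epsL ((b ⊗ₜ[R] (1:H)) * D) * h)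
      = LinearMap.mul' R R
          (TensorProduct.map (counit ∘ₗ mulLeft R b) (counit ∘ₗ mulRight R h) D) := by
  rw [tmul_one_mul]
  induction D using TensorProduct.induction_on with
  | zero => simp
  | tmul c d => simp [smul_mul_assoc]
  | add a b ha hb => simp only [map_add, add_mul, ha, hb]

lemma scalar_rm_aux (h a c : H) (D : H ⊗[R] H) :
    GRm h (Fc (TensorProduct.map LinearMap.id ((TensorProduct.mk R H H).flip c)
        (TensorProduct.map LinearMap.id (mulLeft R a) D)))
      = LinearMap.mul' R R
          (TensorProduct.map (counit ∘ₗ mulRight R h) (counit ∘ₗ mulLeft R a) D) • c := by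
  induction D using TensorProduct.induction_on with
  | zero => simp
  | tmul u v => simp [smul_smul, mul_comm]
  | add x y hx hy => simp only [map_add, add_smul, hx, hy]

-- the two collapse lemmas (axioms (lm), (rm) in tensorized form)
lemma lm_collapse (hlm : LM R H) (h : H) (A B : H ⊗[R] H) :
    GLm h (Fc ((TensorProduct.map LinearMap.id ((TensorProduct.mk R H H).flip (1:H)) A)
        * (comul (R := R)).lTensor H B))
      = GLm h (A * B) := by
  induction A using TensorProduct.induction_on with
  | zero => simp [zero_mul]
  | tmul a b =>
      induction B using TensorProduct.induction_on with
      | zero => simp [mul_zero]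
      | tmul p q =>
          rw [lTensor_tmul, TensorProduct.map_tmul]
          rw [Algebra.TensorProduct.tmul_mul_tmul, Algebra.TensorProduct.tmul_mul_tmul]
          rw [Fc_tmul, LinearMap.id_apply, GLm_tmul, GLm_tmul]
          rw [show ((TensorProduct.mk R H H).flip (1:H)) b = b ⊗ₜ[R] (1:H) from rfl]
          rw [scalar_lm_aux h b (comul q), ← hlm b q h]
      | add p q hp hq => simp only [map_add, mul_add, hp, hq]
  | add a b ha hb => simp only [map_add, add_mul, ha, hb]

lemma rm_collapse (hrm : RM R H) (h : H) (A B : H ⊗[R] H) :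
    GRm h (Fc ((Algebra.TensorProduct.assoc R R R H H H)
        ((TensorProduct.map (TensorProduct.mk R H H (1:H)) LinearMap.id A)
          * (comul (R := R)).rTensor H B)))
      = GRm h (A * B) := by
  induction A using TensorProduct.induction_on with
  | zero => simp [zero_mul]
  | tmul a b =>
      induction B using TensorProduct.induction_on with
      | zero => simp [mul_zero]
      | tmul p q =>
          rw [rTensor_tmul, TensorProduct.map_tmul]
          rw [Algebra.TensorProduct.tmul_mul_tmul, Algebra.TensorProduct.tmul_mul_tmul]
          rw [show (TensorProduct.mk R H H (1:H)) a = (1:H) ⊗ₜ[R] a from rfl]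
          rw [Lam_tmulX, one_tmul_mul, LinearMap.id_apply,
            scalar_rm_aux h a (b*q) (comul p), ← hrm a p h, GRm_tmul]
      | add p q hp hq => simp only [map_add, mul_add, hp, hq]
  | add a b ha hb => simp only [map_add, add_mul, ha, hb]

-- MASTER LEMMA 1 : x * ε̄s(h) = x₍₁₎ ε(x₍₂₎ h)
lemma ML1 (hpre : ComulMul R H) (hlm : LM R H) (h x : H) :
    x * epsSbar R H h = GLm h (comul (R := R) x) := by
  rw [epsSbar_eq, mul_GLm, expandL hpre x (comul (R := R) (1:H))]
  have step := LinearMap.congr_fun (GLm_FcL_assoc (R := R) h)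
    ((comul (R := R) x ⊗ₜ[R] (1:H)) * (comul (R := R)).rTensor H (comul (R := R) (1:H)))
  simp only [LinearMap.comp_apply] at step
  rw [step, AlgEquiv.toLinearMap_apply, map_mul, Lam_tmulX, Lam_coassoc]
  rw [lm_collapse hlm h (comul (R := R) x) (comul (R := R) (1:H))]
  rw [← hpre x 1, mul_one]

-- MASTER LEMMA 2 : x * εt(h) = ε(x₍₁₎ h) x₍₂₎
lemma ML2 (hpre : ComulMul R H) (hrm : RM R H) (h x : H) :
    x * epsT R H h = GRm h (comul (R := R) x) := by
  rw [epsT_eq, mul_GRm, expandR hpre x (comul (R := R) (1:H))]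
  rw [← Lam_one_tmul (comul (R := R) x), ← Lam_coassoc (1:H), ← map_mul]
  rw [rm_collapse hrm h (comul (R := R) x) (comul (R := R) (1:H))]
  rw [← hpre x 1, mul_one]

-- comultiplication of GLm/GRm images
lemma comul_GLm (h : H) (C : H ⊗[R] H) :
    comul (R := R) (GLm h C)
      = (TensorProduct.rid R (H ⊗[R] H))
          (TensorProduct.map LinearMap.id (gR h) ((comul (R := R)).rTensor H C)) := by
  induction C using TensorProduct.induction_on with
  | zero => simp
  | tmul u v => simp [gR]
  | add a b ha hb => simp only [map_add, ha, hb]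

lemma comul_GRm (k : H) (C : H ⊗[R] H) :
    comul (R := R) (GRm k C)
      = (TensorProduct.lid R (H ⊗[R] H))
          (TensorProduct.map (gR k) LinearMap.id ((comul (R := R)).lTensor H C)) := by
  induction C using TensorProduct.induction_on with
  | zero => simp
  | tmul u v => simp [gR]
  | add a b ha hb => simp only [map_add, ha, hb]

lemma bridge1 (h k : H) :
    (GRm (R := R) k) ∘ₗ (TensorProduct.rid R (H ⊗[R] H)).toLinearMap
        ∘ₗ TensorProduct.map LinearMap.id (gR h)
      = (GLm h) ∘ₗ (TensorProduct.lid R (H ⊗[R] H)).toLinearMap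
          ∘ₗ TensorProduct.map (gR k) LinearMap.id
          ∘ₗ (Algebra.TensorProduct.assoc R R R H H H).toLinearMap := by
  apply TensorProduct.ext_threefold
  intro a b c
  simp [gR, smul_smul, mul_comm]

lemma bridge2 (h : H) :
    TensorProduct.map (GLm (R := R) h) LinearMap.id
      = TensorProduct.map LinearMap.id (GRm h)
          ∘ₗ (Algebra.TensorProduct.assoc R R R H H H).toLinearMap := by
  apply TensorProduct.ext_threefold
  intro a b c
  simp [smul_tmul, tmul_smul]

-- Goal 1 packaged
lemma goal1 (hpre : ComulMul R H) (hlm : LM R H) (hrm : RM R H) (h k : H) :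
    epsSbar R H h * epsT R H k = epsT R H k * epsSbar R H h := by
  rw [ML2 hpre hrm k (epsSbar R H h), ML1 hpre hlm h (epsT R H k)]
  rw [epsSbar_eq, epsT_eq, comul_GLm, comul_GRm]
  have b1 := LinearMap.congr_fun (bridge1 (R := R) h k)
    ((comul (R := R)).rTensor H (comul (R := R) (1:H)))
  simp only [LinearMap.comp_apply, LinearEquiv.coe_coe, AlgEquiv.toLinearMap_apply] at b1
  rw [b1, Lam_coassoc]

-- Goal 2 packaged
lemma goal2 (hpre : ComulMul R H) (hlm : LM R H) (hrm : RM R H) (h : H) :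
    comul (R := R) (1 : H) * (epsSbar R H h ⊗ₜ[R] (1 : H))
      = comul (R := R) (1 : H) * ((1 : H) ⊗ₜ[R] epsT R H h) := by
  rw [mul_tmul_one, mul_one_tmul]
  have e1 : mulRight R (epsSbar R H h) = GLm h ∘ₗ comul (R := R) :=
    LinearMap.ext fun x => by rw [mulRight_apply, ML1 hpre hlm h x]; rfl
  have e2 : mulRight R (epsT R H h) = GRm h ∘ₗ comul (R := R) :=
    LinearMap.ext fun x => by rw [mulRight_apply, ML2 hpre hrm h x]; rfl
  rw [e1, e2]
  have m1 : ∀ C : H ⊗[R] H,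
      TensorProduct.map (GLm (R := R) h ∘ₗ comul) LinearMap.id C
        = TensorProduct.map (GLm h) LinearMap.id ((comul (R := R)).rTensor H C) := by
    intro C
    induction C using TensorProduct.induction_on with
    | zero => simp
    | tmul u v => simp
    | add a b ha hb => simp only [map_add, ha, hb]
  have m2 : ∀ C : H ⊗[R] H,
      TensorProduct.map LinearMap.id (GRm (R := R) h ∘ₗ comul) C
        = TensorProduct.map LinearMap.id (GRm h) ((comul (R := R)).lTensor H C) := by
    intro C
    induction C using TensorProduct.induction_on with
    | zero => simp
    | tmul u v => simp
    | add a b ha hb => simp only [map_add, ha, hb]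
  rw [m1, m2, ← Lam_coassoc (1:H)]
  have b2 := LinearMap.congr_fun (bridge2 (R := R) h)
    ((comul (R := R)).rTensor H (comul (R := R) (1:H)))
  simp only [LinearMap.comp_apply, AlgEquiv.toLinearMap_apply] at b2
  exact b2

end Aux

/-- In a monoidal prebialgebra, `ε̄_s(h)ε_t(k) = ε_t(k)ε̄_s(h)` and
`1₍₁₎ε̄_s(h) ⊗ 1₍₂₎ = 1₍₁₎ ⊗ 1₍₂₎ε_t(h)` for all `h,k`. -/
theorem m_epsSbar_epsT_comm
    (R H : Type) [CommRing R] [Ring H] [Algebra R H] [Coalgebra R H]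
    (hpre : ComulMul R H) (hlm : LM R H) (hrm : RM R H) :
    (∀ h k : H, epsSbar R H h * epsT R H k = epsT R H k * epsSbar R H h) ∧
    (∀ h : H,
      Coalgebra.comul (R := R) (1 : H) * (epsSbar R H h ⊗ₜ[R] (1 : H)) =
        Coalgebra.comul (R := R) (1 : H) * ((1 : H) ⊗ₜ[R] epsT R H h)) := by
  exact ⟨fun h k => goal1 hpre hlm hrm h k, fun h => goal2 hpre hlm hrm h⟩
end

section
/- Let H be a monoidal prebialgebra and M a left H-module. Then the map l̄_M: M → H_L* ⊗ M, l̄_M(m) = g(1₍₁₎) ⊗ 1₍₂₎·m, is left H-linear (where H_L* carries the H-action k·g(h) = g(kh)) if and only if H satisfies (lm). Dually, r̄_M(m) = 1₍₁₎·m ⊗ g(1₍₂₎) is H-linear for all M if and only if (rm) holds. Equivalently: (lm) holds iff g(1₍₁₎) ⊗ 1₍₂₎h = g(h₍₁₎) ⊗ h₍₂₎ for all h ∈ H. -/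
open TensorProduct Coalgebra

/-- For a left `H`-module `M` and `m : M`, the `R`-linear map `h ↦ h • m`. -/
noncomputable def actLin (R H : Type) [CommRing R] [Ring H] [Algebra R H]
    (M : Type) [AddCommGroup M] [Module R M] [Module H M] [IsScalarTower R H M]
    (m : M) : H →ₗ[R] M where
  toFun h := h • m
  map_add' a b := add_smul a b m
  map_smul' r a := by simp [smul_assoc]

section AuxProof
set_option linter.unusedSectionVars false
set_option synthInstance.maxHeartbeats 1000000
set_option maxHeartbeats 1000000

variable {R H : Type} [CommRing R] [Ring H] [Algebra R H] [Coalgebra R H]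

/-- `E1 (a ⊗ b) = ε(a) • b`. -/
noncomputable def E1 (R H : Type) [CommRing R] [Ring H] [Algebra R H] [Coalgebra R H] :
    H ⊗[R] H →ₗ[R] H :=
  (TensorProduct.lid R H).toLinearMap ∘ₗ TensorProduct.map Coalgebra.counit LinearMap.id

/-- `E2 (a ⊗ b) = ε(b) • a`. -/
noncomputable def E2 (R H : Type) [CommRing R] [Ring H] [Algebra R H] [Coalgebra R H] :
    H ⊗[R] H →ₗ[R] H :=
  (TensorProduct.rid R H).toLinearMap ∘ₗ TensorProduct.map LinearMap.id Coalgebra.counit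

@[simp] lemma gmap_apply (h k : H) :
    gmap R H h k = Coalgebra.counit (R := R) (k * h) := rfl

@[simp] lemma E1_tmul (a b : H) :
    E1 R H (a ⊗ₜ[R] b) = Coalgebra.counit (R := R) a • b := by simp [E1]

@[simp] lemma E2_tmul (a b : H) :
    E2 R H (a ⊗ₜ[R] b) = Coalgebra.counit (R := R) b • a := by simp [E2]

lemma E1_comul (a : H) : E1 R H (Coalgebra.comul (R := R) a) = a := by
  have h := Coalgebra.rTensor_counit_comul (R := R) a
  rw [show (Coalgebra.counit (R := R)).rTensor H =
      TensorProduct.map Coalgebra.counit LinearMap.id from rfl] at h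
  simp [E1, h]

lemma E2_comul (a : H) : E2 R H (Coalgebra.comul (R := R) a) = a := by
  have h := Coalgebra.lTensor_counit_comul (R := R) a
  rw [show (Coalgebra.counit (R := R)).lTensor H =
      TensorProduct.map LinearMap.id Coalgebra.counit from rfl] at h
  simp [E2, h]

lemma mul_tmul_gen (t : H ⊗[R] H) (x y : H) :
    t * (x ⊗ₜ[R] y) =
      TensorProduct.map (LinearMap.mulRight R x) (LinearMap.mulRight R y) t := by
  induction t using TensorProduct.induction_on with
  | zero => simp [zero_mul]
  | tmul a b => simp [Algebra.TensorProduct.tmul_mul_tmul]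
  | add u v hu hv => simp [add_mul, hu, hv]

lemma E1_mul_one_tmul (t : H ⊗[R] H) (h : H) :
    E1 R H (t * ((1 : H) ⊗ₜ[R] h)) = E1 R H t * h := by
  induction t using TensorProduct.induction_on with
  | zero => simp [zero_mul]
  | tmul a b => simp [Algebra.TensorProduct.tmul_mul_tmul, smul_mul_assoc]
  | add u v hu hv => simp [add_mul, hu, hv]

lemma E2_mul_tmul_one (t : H ⊗[R] H) (h : H) :
    E2 R H (t * (h ⊗ₜ[R] (1 : H))) = E2 R H t * h := by
  induction t using TensorProduct.induction_on with
  | zero => simp [zero_mul]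
  | tmul a b => simp [Algebra.TensorProduct.tmul_mul_tmul, smul_mul_assoc]
  | add u v hu hv => simp [add_mul, hu, hv]

/-- evaluation at `k` as a linear map on the dual. -/
noncomputable def evalAt (R : Type) [CommRing R] {H : Type} [AddCommGroup H] [Module R H]
    (k : H) : (H →ₗ[R] R) →ₗ[R] R where
  toFun φ := φ k
  map_add' := fun _ _ => rfl
  map_smul' := fun _ _ => rfl

@[simp] lemma evalAt_apply (k : H) (φ : H →ₗ[R] R) : evalAt R k φ = φ k := rfl

/-- `Kmap (u ⊗ t) = E1 (Δu * t)`. -/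
noncomputable def Kmap (R H : Type) [CommRing R] [Ring H] [Algebra R H] [Coalgebra R H] :
    H ⊗[R] (H ⊗[R] H) →ₗ[R] H :=
  E1 R H ∘ₗ LinearMap.mul' R (H ⊗[R] H) ∘ₗ
    TensorProduct.map Coalgebra.comul LinearMap.id

@[simp] lemma Kmap_tmul (u : H) (t : H ⊗[R] H) :
    Kmap R H (u ⊗ₜ[R] t) = E1 R H (Coalgebra.comul (R := R) u * t) := by
  simp [Kmap, LinearMap.mul'_apply]

/-- `Kmap' (t ⊗ u) = E2 (Δu * t)`. -/
noncomputable def Kmap' (R H : Type) [CommRing R] [Ring H] [Algebra R H] [Coalgebra R H] :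
    (H ⊗[R] H) ⊗[R] H →ₗ[R] H :=
  E2 R H ∘ₗ LinearMap.mul' R (H ⊗[R] H) ∘ₗ
    (TensorProduct.comm R (H ⊗[R] H) (H ⊗[R] H)).toLinearMap ∘ₗ
    TensorProduct.map LinearMap.id Coalgebra.comul

@[simp] lemma Kmap'_tmul (t : H ⊗[R] H) (u : H) :
    Kmap' R H (t ⊗ₜ[R] u) = E2 R H (Coalgebra.comul (R := R) u * t) := by
  simp [Kmap', LinearMap.mul'_apply]

end AuxProof

section FwdProof
set_option linter.unusedSectionVars false
set_option synthInstance.maxHeartbeats 1000000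
set_option maxHeartbeats 1000000

variable {R H : Type} [CommRing R] [Ring H] [Algebra R H] [Coalgebra R H]

lemma lm_of_stmt
    (S : ∀ h : H,
      (TensorProduct.map (gmap R H) LinearMap.id)
          (Coalgebra.comul (R := R) (1 : H) * ((1 : H) ⊗ₜ[R] h)) =
        (TensorProduct.map (gmap R H) LinearMap.id) (Coalgebra.comul (R := R) h)) :
    LM R H := by
  -- F1 : ∀ h m, Σ ε(h 1₁) ε(1₂ m) = ε(h m)
  have F1 : ∀ h m : H,
      LinearMap.mul' R R
        (TensorProduct.map (Coalgebra.counit ∘ₗ LinearMap.mulLeft R h)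
          (Coalgebra.counit ∘ₗ LinearMap.mulRight R m)
          (Coalgebra.comul (R := R) (1 : H))) =
      Coalgebra.counit (R := R) (h * m) := by
    intro h m
    set Λ : (H →ₗ[R] R) ⊗[R] H →ₗ[R] R :=
      LinearMap.mul' R R ∘ₗ TensorProduct.map (evalAt R h) Coalgebra.counit with hΛ
    have e1 : ∀ t : H ⊗[R] H,
        Λ ((TensorProduct.map (gmap R H) LinearMap.id) (t * ((1 : H) ⊗ₜ[R] m))) =
        LinearMap.mul' R R
          (TensorProduct.map (Coalgebra.counit ∘ₗ LinearMap.mulLeft R h)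
            (Coalgebra.counit ∘ₗ LinearMap.mulRight R m) t) := by
      intro t
      induction t using TensorProduct.induction_on with
      | zero => simp [zero_mul]
      | tmul a b => simp [Algebra.TensorProduct.tmul_mul_tmul, hΛ, LinearMap.mul'_apply]
      | add u v hu hv => simp [add_mul, hu, hv]
    have e2 : ∀ t : H ⊗[R] H,
        Λ ((TensorProduct.map (gmap R H) LinearMap.id) t) =
        Coalgebra.counit (R := R) (h * E2 R H t) := by
      intro t
      induction t using TensorProduct.induction_on with
      | zero => simp
      | tmul a b =>
          simp [hΛ, LinearMap.mul'_apply, mul_smul_comm, smul_eq_mul, mul_comm]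
      | add u v hu hv => simp [mul_add, hu, hv]
    have hc := congrArg Λ (S m)
    rw [e1, e2, E2_comul] at hc
    exact hc
  intro h k l
  set Λ : (H →ₗ[R] R) ⊗[R] H →ₗ[R] R :=
    LinearMap.mul' R R ∘ₗ
      TensorProduct.map (evalAt R h) (Coalgebra.counit ∘ₗ LinearMap.mulRight R l) with hΛ
  have e4 : ∀ t : H ⊗[R] H,
      Λ ((TensorProduct.map (gmap R H) LinearMap.id) (t * ((1 : H) ⊗ₜ[R] k))) =
      LinearMap.mul' R R
        (TensorProduct.map (Coalgebra.counit ∘ₗ LinearMap.mulLeft R h)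
          (Coalgebra.counit ∘ₗ LinearMap.mulRight R (k * l)) t) := by
    intro t
    induction t using TensorProduct.induction_on with
    | zero => simp [zero_mul]
    | tmul a b =>
        simp [Algebra.TensorProduct.tmul_mul_tmul, hΛ, LinearMap.mul'_apply, mul_assoc]
    | add u v hu hv => simp [add_mul, hu, hv]
  have e5 : ∀ t : H ⊗[R] H,
      Λ ((TensorProduct.map (gmap R H) LinearMap.id) t) =
      LinearMap.mul' R R
        (TensorProduct.map (Coalgebra.counit ∘ₗ LinearMap.mulLeft R h)
          (Coalgebra.counit ∘ₗ LinearMap.mulRight R l) t) := by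
    intro t
    induction t using TensorProduct.induction_on with
    | zero => simp
    | tmul a b => simp [hΛ, LinearMap.mul'_apply]
    | add u v hu hv => simp [hu, hv]
  have hc := congrArg Λ (S k)
  rw [e4, e5] at hc
  rw [mul_assoc, ← F1 h (k * l)]
  exact hc

lemma rm_of_stmt
    (S : ∀ h : H,
      (TensorProduct.map LinearMap.id (gmap R H))
          (Coalgebra.comul (R := R) (1 : H) * (h ⊗ₜ[R] (1 : H))) =
        (TensorProduct.map LinearMap.id (gmap R H)) (Coalgebra.comul (R := R) h)) :
    RM R H := by
  have F1 : ∀ h m : H,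
      LinearMap.mul' R R
        (TensorProduct.map (Coalgebra.counit ∘ₗ LinearMap.mulRight R m)
          (Coalgebra.counit ∘ₗ LinearMap.mulLeft R h)
          (Coalgebra.comul (R := R) (1 : H))) =
      Coalgebra.counit (R := R) (h * m) := by
    intro h m
    set Λ : H ⊗[R] (H →ₗ[R] R) →ₗ[R] R :=
      LinearMap.mul' R R ∘ₗ TensorProduct.map Coalgebra.counit (evalAt R h) with hΛ
    have e1 : ∀ t : H ⊗[R] H,
        Λ ((TensorProduct.map LinearMap.id (gmap R H)) (t * (m ⊗ₜ[R] (1 : H)))) =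
        LinearMap.mul' R R
          (TensorProduct.map (Coalgebra.counit ∘ₗ LinearMap.mulRight R m)
            (Coalgebra.counit ∘ₗ LinearMap.mulLeft R h) t) := by
      intro t
      induction t using TensorProduct.induction_on with
      | zero => simp [zero_mul]
      | tmul a b => simp [Algebra.TensorProduct.tmul_mul_tmul, hΛ, LinearMap.mul'_apply]
      | add u v hu hv => simp [add_mul, hu, hv]
    have e2 : ∀ t : H ⊗[R] H,
        Λ ((TensorProduct.map LinearMap.id (gmap R H)) t) =
        Coalgebra.counit (R := R) (h * E1 R H t) := by
      intro t
      induction t using TensorProduct.induction_on with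
      | zero => simp
      | tmul a b =>
          simp [hΛ, LinearMap.mul'_apply, mul_smul_comm, smul_eq_mul, mul_comm]
      | add u v hu hv => simp [mul_add, hu, hv]
    have hc := congrArg Λ (S m)
    rw [e1, e2, E1_comul] at hc
    exact hc
  intro h k l
  set Λ : H ⊗[R] (H →ₗ[R] R) →ₗ[R] R :=
    LinearMap.mul' R R ∘ₗ
      TensorProduct.map (Coalgebra.counit ∘ₗ LinearMap.mulRight R l) (evalAt R h) with hΛ
  have e4 : ∀ t : H ⊗[R] H,
      Λ ((TensorProduct.map LinearMap.id (gmap R H)) (t * (k ⊗ₜ[R] (1 : H)))) =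
      LinearMap.mul' R R
        (TensorProduct.map (Coalgebra.counit ∘ₗ LinearMap.mulRight R (k * l))
          (Coalgebra.counit ∘ₗ LinearMap.mulLeft R h) t) := by
    intro t
    induction t using TensorProduct.induction_on with
    | zero => simp [zero_mul]
    | tmul a b =>
        simp [Algebra.TensorProduct.tmul_mul_tmul, hΛ, LinearMap.mul'_apply, mul_assoc]
    | add u v hu hv => simp [add_mul, hu, hv]
  have e5 : ∀ t : H ⊗[R] H,
      Λ ((TensorProduct.map LinearMap.id (gmap R H)) t) =
      LinearMap.mul' R R
        (TensorProduct.map (Coalgebra.counit ∘ₗ LinearMap.mulRight R l)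
          (Coalgebra.counit ∘ₗ LinearMap.mulLeft R h) t) := by
    intro t
    induction t using TensorProduct.induction_on with
    | zero => simp
    | tmul a b => simp [hΛ, LinearMap.mul'_apply]
    | add u v hu hv => simp [hu, hv]
  have hc := congrArg Λ (S k)
  rw [e4, e5] at hc
  rw [mul_assoc, ← F1 h (k * l)]
  exact hc

end FwdProof

section BwdProof
set_option linter.unusedSectionVars false
set_option synthInstance.maxHeartbeats 1000000
set_option maxHeartbeats 1000000

variable {R H : Type} [CommRing R] [Ring H] [Algebra R H] [Coalgebra R H]

lemma gmap_mulRight_lm (hlm : LM R H) (x : H) :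
    gmap R H ∘ₗ LinearMap.mulRight R x =
      (TensorProduct.rid R (H →ₗ[R] R)).toLinearMap ∘ₗ
        TensorProduct.map (gmap R H) (Coalgebra.counit ∘ₗ LinearMap.mulRight R x) ∘ₗ
        Coalgebra.comul := by
  apply LinearMap.ext; intro a
  apply LinearMap.ext; intro k
  have key : ∀ t : H ⊗[R] H,
      ((TensorProduct.rid R (H →ₗ[R] R))
        (TensorProduct.map (gmap R H) (Coalgebra.counit ∘ₗ LinearMap.mulRight R x) t)) k =
      LinearMap.mul' R R
        (TensorProduct.map (Coalgebra.counit ∘ₗ LinearMap.mulLeft R k)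
          (Coalgebra.counit ∘ₗ LinearMap.mulRight R x) t) := by
    intro t
    induction t using TensorProduct.induction_on with
    | zero => simp
    | tmul a b => simp [LinearMap.mul'_apply, mul_comm]
    | add u v hu hv => simp [hu, hv]
  simp only [LinearMap.comp_apply, LinearMap.mulRight_apply, gmap_apply,
    LinearEquiv.coe_coe]
  rw [key, ← hlm k a x, mul_assoc]

lemma gmap_mulRight_rm (hrm : RM R H) (y : H) :
    gmap R H ∘ₗ LinearMap.mulRight R y =
      (TensorProduct.lid R (H →ₗ[R] R)).toLinearMap ∘ₗ
        TensorProduct.map (Coalgebra.counit ∘ₗ LinearMap.mulRight R y) (gmap R H) ∘ₗ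
        Coalgebra.comul := by
  apply LinearMap.ext; intro a
  apply LinearMap.ext; intro k
  have key : ∀ t : H ⊗[R] H,
      ((TensorProduct.lid R (H →ₗ[R] R))
        (TensorProduct.map (Coalgebra.counit ∘ₗ LinearMap.mulRight R y) (gmap R H) t)) k =
      LinearMap.mul' R R
        (TensorProduct.map (Coalgebra.counit ∘ₗ LinearMap.mulRight R y)
          (Coalgebra.counit ∘ₗ LinearMap.mulLeft R k) t) := by
    intro t
    induction t using TensorProduct.induction_on with
    | zero => simp
    | tmul a b => simp [LinearMap.mul'_apply]
    | add u v hu hv => simp [hu, hv]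
  simp only [LinearMap.comp_apply, LinearMap.mulRight_apply, gmap_apply,
    LinearEquiv.coe_coe]
  rw [key, ← hrm k a y, mul_assoc]

lemma core_lm (x y : H) (w : (H ⊗[R] H) ⊗[R] H) :
    TensorProduct.map
        ((TensorProduct.rid R (H →ₗ[R] R)).toLinearMap ∘ₗ
          TensorProduct.map (gmap R H) (Coalgebra.counit ∘ₗ LinearMap.mulRight R x))
        (LinearMap.mulRight R y) w =
    TensorProduct.map (gmap R H)
        (E1 R H ∘ₗ TensorProduct.map (LinearMap.mulRight R x) (LinearMap.mulRight R y))
        ((TensorProduct.assoc R H H H) w) := by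
  induction w using TensorProduct.induction_on with
  | zero => simp
  | tmul p c =>
      induction p using TensorProduct.induction_on with
      | zero => simp [TensorProduct.zero_tmul]
      | tmul a b =>
          simp only [TensorProduct.assoc_tmul, TensorProduct.map_tmul,
            LinearMap.comp_apply, LinearMap.mulRight_apply, E1_tmul,
            LinearEquiv.coe_coe, TensorProduct.rid_tmul]
          rw [TensorProduct.smul_tmul]
      | add u v hu hv => simp only [TensorProduct.add_tmul, map_add, hu, hv]
  | add u v hu hv => simp only [map_add, hu, hv]

lemma core_rm (x y : H) (w : (H ⊗[R] H) ⊗[R] H) :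
    TensorProduct.map (LinearMap.mulRight R x)
        ((TensorProduct.lid R (H →ₗ[R] R)).toLinearMap ∘ₗ
          TensorProduct.map (Coalgebra.counit ∘ₗ LinearMap.mulRight R y) (gmap R H))
        ((TensorProduct.assoc R H H H) w) =
    TensorProduct.map
        (E2 R H ∘ₗ TensorProduct.map (LinearMap.mulRight R x) (LinearMap.mulRight R y))
        (gmap R H) w := by
  induction w using TensorProduct.induction_on with
  | zero => simp
  | tmul p c =>
      induction p using TensorProduct.induction_on with
      | zero => simp [TensorProduct.zero_tmul]
      | tmul a b =>
          simp only [TensorProduct.assoc_tmul, TensorProduct.map_tmul,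
            LinearMap.comp_apply, LinearMap.mulRight_apply, E2_tmul,
            LinearEquiv.coe_coe, TensorProduct.lid_tmul]
          rw [TensorProduct.smul_tmul]
      | add u v hu hv => simp only [TensorProduct.add_tmul, map_add, hu, hv]
  | add u v hu hv => simp only [map_add, hu, hv]

lemma rhs_aux_lm (x y : H) (s : H ⊗[R] H) :
    TensorProduct.map (gmap R H) (Kmap R H)
        ((TensorProduct.assoc R H H (H ⊗[R] H)) (s ⊗ₜ[R] (x ⊗ₜ[R] y))) =
    TensorProduct.map (gmap R H)
        (E1 R H ∘ₗ TensorProduct.map (LinearMap.mulRight R x) (LinearMap.mulRight R y) ∘ₗ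
          Coalgebra.comul) s := by
  induction s using TensorProduct.induction_on with
  | zero => simp [TensorProduct.zero_tmul]
  | tmul a b => simp [TensorProduct.assoc_tmul, mul_tmul_gen]
  | add u v hu hv => simp only [TensorProduct.add_tmul, map_add, hu, hv]

lemma rhs_aux_rm (x y : H) (s : H ⊗[R] H) :
    TensorProduct.map (Kmap' R H) (gmap R H)
        ((TensorProduct.assoc R (H ⊗[R] H) H H).symm ((x ⊗ₜ[R] y) ⊗ₜ[R] s)) =
    TensorProduct.map
        (E2 R H ∘ₗ TensorProduct.map (LinearMap.mulRight R x) (LinearMap.mulRight R y) ∘ₗ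
          Coalgebra.comul)
        (gmap R H) s := by
  induction s using TensorProduct.induction_on with
  | zero => simp [TensorProduct.tmul_zero]
  | tmul a b => simp [TensorProduct.assoc_symm_tmul, mul_tmul_gen]
  | add u v hu hv => simp only [TensorProduct.tmul_add, map_add, hu, hv]

lemma step1_lm (hlm : LM R H) :
    TensorProduct.map (gmap R H) (LinearMap.id (R := R) (M := H)) ∘ₗ
        LinearMap.mulLeft R (Coalgebra.comul (R := R) (1 : H)) =
      TensorProduct.map (gmap R H) (Kmap R H) ∘ₗ
        (TensorProduct.assoc R H H (H ⊗[R] H)).toLinearMap ∘ₗ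
        TensorProduct.mk R (H ⊗[R] H) (H ⊗[R] H) (Coalgebra.comul (R := R) (1 : H)) := by
  apply TensorProduct.ext'
  intro x y
  simp only [LinearMap.comp_apply, LinearMap.mulLeft_apply, TensorProduct.mk_apply,
    LinearEquiv.coe_coe]
  rw [mul_tmul_gen, rhs_aux_lm]
  rw [← LinearMap.comp_apply, ← TensorProduct.map_comp, LinearMap.id_comp,
    gmap_mulRight_lm hlm x]
  rw [← LinearMap.comp_assoc]
  have hs1 : TensorProduct.map
      (((TensorProduct.rid R (H →ₗ[R] R)).toLinearMap ∘ₗ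
        TensorProduct.map (gmap R H) (Coalgebra.counit ∘ₗ LinearMap.mulRight R x)) ∘ₗ
        Coalgebra.comul) (LinearMap.mulRight R y) =
      TensorProduct.map
        ((TensorProduct.rid R (H →ₗ[R] R)).toLinearMap ∘ₗ
          TensorProduct.map (gmap R H) (Coalgebra.counit ∘ₗ LinearMap.mulRight R x))
        (LinearMap.mulRight R y) ∘ₗ
        TensorProduct.map Coalgebra.comul LinearMap.id := by
    rw [← TensorProduct.map_comp, LinearMap.comp_id]
  have hs2 : TensorProduct.map (gmap R H)
      (E1 R H ∘ₗ TensorProduct.map (LinearMap.mulRight R x) (LinearMap.mulRight R y) ∘ₗ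
        Coalgebra.comul) =
      TensorProduct.map (gmap R H)
        (E1 R H ∘ₗ TensorProduct.map (LinearMap.mulRight R x) (LinearMap.mulRight R y)) ∘ₗ
        TensorProduct.map LinearMap.id Coalgebra.comul := by
    rw [← TensorProduct.map_comp, LinearMap.comp_id, LinearMap.comp_assoc]
  rw [hs1, hs2]
  simp only [LinearMap.comp_apply]
  have hco : (TensorProduct.map LinearMap.id Coalgebra.comul)
        (Coalgebra.comul (R := R) (1 : H)) =
      (TensorProduct.assoc R H H H)
        ((TensorProduct.map Coalgebra.comul LinearMap.id)
          (Coalgebra.comul (R := R) (1 : H))) :=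
    (Coalgebra.coassoc_apply (1 : H)).symm
  rw [hco]
  exact core_lm x y _

lemma step1_rm (hrm : RM R H) :
    TensorProduct.map (LinearMap.id (R := R) (M := H)) (gmap R H) ∘ₗ
        LinearMap.mulLeft R (Coalgebra.comul (R := R) (1 : H)) =
      TensorProduct.map (Kmap' R H) (gmap R H) ∘ₗ
        (TensorProduct.assoc R (H ⊗[R] H) H H).symm.toLinearMap ∘ₗ
        (TensorProduct.mk R (H ⊗[R] H) (H ⊗[R] H)).flip (Coalgebra.comul (R := R) (1 : H)) := by
  apply TensorProduct.ext'
  intro x y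
  simp only [LinearMap.comp_apply, LinearMap.mulLeft_apply, TensorProduct.mk_apply,
    LinearMap.flip_apply, LinearEquiv.coe_coe]
  rw [mul_tmul_gen, rhs_aux_rm]
  rw [← LinearMap.comp_apply, ← TensorProduct.map_comp, LinearMap.id_comp,
    gmap_mulRight_rm hrm y]
  rw [← LinearMap.comp_assoc]
  have hs1 : TensorProduct.map (LinearMap.mulRight R x)
      (((TensorProduct.lid R (H →ₗ[R] R)).toLinearMap ∘ₗ
        TensorProduct.map (Coalgebra.counit ∘ₗ LinearMap.mulRight R y) (gmap R H)) ∘ₗ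
        Coalgebra.comul) =
      TensorProduct.map (LinearMap.mulRight R x)
        ((TensorProduct.lid R (H →ₗ[R] R)).toLinearMap ∘ₗ
          TensorProduct.map (Coalgebra.counit ∘ₗ LinearMap.mulRight R y) (gmap R H)) ∘ₗ
        TensorProduct.map LinearMap.id Coalgebra.comul := by
    rw [← TensorProduct.map_comp, LinearMap.comp_id]
  have hs2 : TensorProduct.map
      (E2 R H ∘ₗ TensorProduct.map (LinearMap.mulRight R x) (LinearMap.mulRight R y) ∘ₗ
        Coalgebra.comul) (gmap R H) =
      TensorProduct.map
        (E2 R H ∘ₗ TensorProduct.map (LinearMap.mulRight R x) (LinearMap.mulRight R y))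
        (gmap R H) ∘ₗ
        TensorProduct.map Coalgebra.comul LinearMap.id := by
    rw [← TensorProduct.map_comp, LinearMap.comp_id, LinearMap.comp_assoc]
  rw [hs1, hs2]
  simp only [LinearMap.comp_apply]
  have hco : (TensorProduct.map LinearMap.id Coalgebra.comul)
        (Coalgebra.comul (R := R) (1 : H)) =
      (TensorProduct.assoc R H H H)
        ((TensorProduct.map Coalgebra.comul LinearMap.id)
          (Coalgebra.comul (R := R) (1 : H))) :=
    (Coalgebra.coassoc_apply (1 : H)).symm
  rw [hco]
  exact core_rm x y _

lemma stmt_of_lm (hpre : ComulMul R H) (hlm : LM R H) (h : H) :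
    TensorProduct.map (gmap R H) LinearMap.id
        (Coalgebra.comul (R := R) (1 : H) * ((1 : H) ⊗ₜ[R] h)) =
      TensorProduct.map (gmap R H) LinearMap.id (Coalgebra.comul (R := R) h) := by
  have h1 : Coalgebra.comul (R := R) h =
      Coalgebra.comul (R := R) (1 : H) * Coalgebra.comul (R := R) h := by
    rw [← hpre, one_mul]
  conv_rhs => rw [h1]
  have e := LinearMap.congr_fun (step1_lm (R := R) (H := H) hlm)
  simp only [LinearMap.comp_apply, LinearMap.mulLeft_apply, TensorProduct.mk_apply,
    LinearEquiv.coe_coe] at e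
  rw [e ((1 : H) ⊗ₜ[R] h), e (Coalgebra.comul (R := R) h)]
  have fin : ∀ s : H ⊗[R] H,
      TensorProduct.map (gmap R H) (Kmap R H)
          ((TensorProduct.assoc R H H (H ⊗[R] H)) (s ⊗ₜ[R] ((1 : H) ⊗ₜ[R] h))) =
      TensorProduct.map (gmap R H) (Kmap R H)
          ((TensorProduct.assoc R H H (H ⊗[R] H)) (s ⊗ₜ[R] (Coalgebra.comul (R := R) h))) := by
    intro s
    induction s using TensorProduct.induction_on with
    | zero => simp [TensorProduct.zero_tmul]
    | tmul a b =>
        simp only [TensorProduct.assoc_tmul, TensorProduct.map_tmul, Kmap_tmul]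
        rw [E1_mul_one_tmul, E1_comul, ← hpre, E1_comul]
    | add u v hu hv => simp only [TensorProduct.add_tmul, map_add, hu, hv]
  exact fin _

lemma stmt_of_rm (hpre : ComulMul R H) (hrm : RM R H) (h : H) :
    TensorProduct.map LinearMap.id (gmap R H)
        (Coalgebra.comul (R := R) (1 : H) * (h ⊗ₜ[R] (1 : H))) =
      TensorProduct.map LinearMap.id (gmap R H) (Coalgebra.comul (R := R) h) := by
  have h1 : Coalgebra.comul (R := R) h =
      Coalgebra.comul (R := R) (1 : H) * Coalgebra.comul (R := R) h := by
    rw [← hpre, one_mul]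
  conv_rhs => rw [h1]
  have e := LinearMap.congr_fun (step1_rm (R := R) (H := H) hrm)
  simp only [LinearMap.comp_apply, LinearMap.mulLeft_apply, TensorProduct.mk_apply,
    LinearMap.flip_apply, LinearEquiv.coe_coe] at e
  rw [e (h ⊗ₜ[R] (1 : H)), e (Coalgebra.comul (R := R) h)]
  have fin : ∀ s : H ⊗[R] H,
      TensorProduct.map (Kmap' R H) (gmap R H)
          ((TensorProduct.assoc R (H ⊗[R] H) H H).symm
            ((h ⊗ₜ[R] (1 : H)) ⊗ₜ[R] s)) =
      TensorProduct.map (Kmap' R H) (gmap R H)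
          ((TensorProduct.assoc R (H ⊗[R] H) H H).symm
            ((Coalgebra.comul (R := R) h) ⊗ₜ[R] s)) := by
    intro s
    induction s using TensorProduct.induction_on with
    | zero => simp [TensorProduct.tmul_zero]
    | tmul a b =>
        simp only [TensorProduct.assoc_symm_tmul, TensorProduct.map_tmul, Kmap'_tmul]
        rw [E2_mul_tmul_one, E2_comul, ← hpre, E2_comul]
    | add u v hu hv => simp only [TensorProduct.tmul_add, map_add, hu, hv]
  exact fin _

end BwdProof

/-- For a monoidal prebialgebra `H`:
the map `l̄_M(m) = g(1₍₁₎) ⊗ 1₍₂₎·m` is left `H`-linear for every left `H`-module `M`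
(with the action `k·g(h) = g(kh)` on `H_L*`) iff (lm) holds, iff
`g(1₍₁₎) ⊗ 1₍₂₎h = g(h₍₁₎) ⊗ h₍₂₎` for all `h`; dually, `r̄_M(m) = 1₍₁₎·m ⊗ g(1₍₂₎)`
is `H`-linear for every `M` iff (rm) holds, iff `1₍₁₎h ⊗ g(1₍₂₎) = h₍₁₎ ⊗ g(h₍₂₎)`. -/
theorem lbar_rbar_linear_iff
    (R H : Type) [CommRing R] [Ring H] [Algebra R H] [Coalgebra R H]
    (hpre : ComulMul R H) :
    ((∀ (M : Type) [AddCommGroup M] [Module R M] [Module H M] [IsScalarTower R H M]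
        (m : M) (h : H),
        (TensorProduct.map (gmap R H) (actLin R H M m))
            (Coalgebra.comul (R := R) (1 : H) * ((1 : H) ⊗ₜ[R] h)) =
          (TensorProduct.map (gmap R H) (actLin R H M m)) (Coalgebra.comul (R := R) h)) ↔
      LM R H) ∧
    ((∀ h : H,
        (TensorProduct.map (gmap R H) LinearMap.id)
            (Coalgebra.comul (R := R) (1 : H) * ((1 : H) ⊗ₜ[R] h)) =
          (TensorProduct.map (gmap R H) LinearMap.id) (Coalgebra.comul (R := R) h)) ↔
      LM R H) ∧
    ((∀ (M : Type) [AddCommGroup M] [Module R M] [Module H M] [IsScalarTower R H M]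
        (m : M) (h : H),
        (TensorProduct.map (actLin R H M m) (gmap R H))
            (Coalgebra.comul (R := R) (1 : H) * (h ⊗ₜ[R] (1 : H))) =
          (TensorProduct.map (actLin R H M m) (gmap R H)) (Coalgebra.comul (R := R) h)) ↔
      RM R H) ∧
    ((∀ h : H,
        (TensorProduct.map LinearMap.id (gmap R H))
            (Coalgebra.comul (R := R) (1 : H) * (h ⊗ₜ[R] (1 : H))) =
          (TensorProduct.map LinearMap.id (gmap R H)) (Coalgebra.comul (R := R) h)) ↔
      RM R H) := by
  have hact : actLin R H H (1 : H) = LinearMap.id := by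
    apply LinearMap.ext; intro h
    simp [actLin, smul_eq_mul]
  refine ⟨⟨?_, ?_⟩, ⟨fun S => lm_of_stmt S, fun hlm h => stmt_of_lm hpre hlm h⟩,
    ⟨?_, ?_⟩, ⟨fun S => rm_of_stmt S, fun hrm h => stmt_of_rm hpre hrm h⟩⟩
  · intro S1
    apply lm_of_stmt
    intro h
    have h2 := S1 H (1 : H) h
    rwa [hact] at h2
  · intro hlm M _ _ _ _ m h
    have key : TensorProduct.map (gmap R H) (actLin R H M m) =
        TensorProduct.map LinearMap.id (actLin R H M m) ∘ₗ
          TensorProduct.map (gmap R H) LinearMap.id := by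
      rw [← TensorProduct.map_comp, LinearMap.id_comp, LinearMap.comp_id]
    rw [key]
    simp only [LinearMap.comp_apply]
    rw [stmt_of_lm hpre hlm h]
  · intro S3
    apply rm_of_stmt
    intro h
    have h2 := S3 H (1 : H) h
    rwa [hact] at h2
  · intro hrm M _ _ _ _ m h
    have key : TensorProduct.map (actLin R H M m) (gmap R H) =
        TensorProduct.map (actLin R H M m) LinearMap.id ∘ₗ
          TensorProduct.map LinearMap.id (gmap R H) := by
      rw [← TensorProduct.map_comp, LinearMap.id_comp, LinearMap.comp_id]
    rw [key]
    simp only [LinearMap.comp_apply]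
    rw [stmt_of_rm hpre hrm h]
end

section
/- Let H be a weak bialgebra, i.e. a prebialgebra satisfying all four axioms (lm), (rm), (lc), (rc). Then H_t = Im(ε_t) is a Frobenius separable k-algebra with separability idempotent e_t = ε_t(1₍₁₎) ⊗ 1₍₂₎ and Frobenius functional the restriction of ε: that is, z·e_t = e_t·z for all z ∈ H_t (componentwise in H_t⊗H_t), ε(ε_t(1₍₁₎))1₍₂₎ = 1 = ε_t(1₍₁₎)ε(1₍₂₎), and ε_t(1₍₁₎)1₍₂₎ = 1. -/
open TensorProduct Coalgebra

section Aux
variable {R H : Type} [CommRing R] [Ring H] [Algebra R H] [Coalgebra R H]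

theorem epsT_rep (S : Finset (H × H))
    (hS : Coalgebra.comul (R := R) (1 : H) = ∑ p ∈ S, p.1 ⊗ₜ[R] p.2) (x : H) :
    epsT R H x = ∑ p ∈ S, Coalgebra.counit (R := R) (p.1 * x) • p.2 := by
  simp only [epsT, LinearMap.comp_apply, AlgHom.toLinearMap_apply,
    Algebra.TensorProduct.includeLeft_apply, LinearMap.mulLeft_apply, hS,
    Finset.sum_mul, Algebra.TensorProduct.tmul_mul_tmul, mul_one, map_sum,
    TensorProduct.map_tmul, LinearMap.id_coe, id_eq, LinearEquiv.coe_coe,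
    TensorProduct.lid_tmul]

theorem epsTbar_rep (S : Finset (H × H))
    (hS : Coalgebra.comul (R := R) (1 : H) = ∑ p ∈ S, p.1 ⊗ₜ[R] p.2) (x : H) :
    epsTbar R H x = ∑ p ∈ S, Coalgebra.counit (R := R) (x * p.1) • p.2 := by
  simp only [epsTbar, LinearMap.comp_apply, AlgHom.toLinearMap_apply,
    Algebra.TensorProduct.includeLeft_apply, LinearMap.mulRight_apply, hS,
    Finset.mul_sum, Algebra.TensorProduct.tmul_mul_tmul, one_mul, map_sum,
    TensorProduct.map_tmul, LinearMap.id_coe, id_eq, LinearEquiv.coe_coe,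
    TensorProduct.lid_tmul]

theorem counit_fst_sum (S : Finset (H × H))
    (hS : Coalgebra.comul (R := R) (1 : H) = ∑ p ∈ S, p.1 ⊗ₜ[R] p.2) :
    ∑ p ∈ S, Coalgebra.counit (R := R) p.1 • p.2 = (1 : H) := by
  have := Coalgebra.rTensor_counit_comul (R := R) (1 : H)
  rw [hS] at this
  simpa [map_sum, TensorProduct.smul_tmul'] using congrArg (TensorProduct.lid R H) this

theorem counit_snd_sum (S : Finset (H × H))
    (hS : Coalgebra.comul (R := R) (1 : H) = ∑ p ∈ S, p.1 ⊗ₜ[R] p.2) :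
    ∑ p ∈ S, Coalgebra.counit (R := R) p.2 • p.1 = (1 : H) := by
  have := Coalgebra.lTensor_counit_comul (R := R) (1 : H)
  rw [hS] at this
  simpa [map_sum, TensorProduct.tmul_smul] using congrArg (TensorProduct.rid R H) this

theorem lm1 (S : Finset (H × H))
    (hS : Coalgebra.comul (R := R) (1 : H) = ∑ p ∈ S, p.1 ⊗ₜ[R] p.2)
    (hlm : LM R H) (x y : H) :
    Coalgebra.counit (R := R) (x * y) =
      ∑ p ∈ S, Coalgebra.counit (R := R) (x * p.1) * Coalgebra.counit (R := R) (p.2 * y) := by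
  have := hlm x 1 y
  rw [hS] at this
  simpa [map_sum, LinearMap.mul'_apply] using this

theorem rm1 (S : Finset (H × H))
    (hS : Coalgebra.comul (R := R) (1 : H) = ∑ p ∈ S, p.1 ⊗ₜ[R] p.2)
    (hrm : RM R H) (x y : H) :
    Coalgebra.counit (R := R) (x * y) =
      ∑ p ∈ S, Coalgebra.counit (R := R) (x * p.2) * Coalgebra.counit (R := R) (p.1 * y) := by
  have := hrm x 1 y
  rw [hS] at this
  simpa [map_sum, LinearMap.mul'_apply, mul_comm] using this

end Aux
section Aux2
variable {R H : Type} [CommRing R] [Ring H] [Algebra R H] [Coalgebra R H]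

/-- Auxiliary projection killing the middle tensor factor with the counit. -/
noncomputable def proj2 : H ⊗[R] (H ⊗[R] H) →ₗ[R] H ⊗[R] H :=
  TensorProduct.map LinearMap.id
    ((TensorProduct.lid R H).toLinearMap ∘ₗ (Coalgebra.counit (R := R)).rTensor H)

theorem proj2_tmul (x u v : H) :
    proj2 (R := R) (x ⊗ₜ[R] (u ⊗ₜ[R] v)) = Coalgebra.counit (R := R) u • (x ⊗ₜ[R] v) := by
  simp [proj2, TensorProduct.tmul_smul]

theorem proj2_comul (x y : H) :
    proj2 (R := R) (x ⊗ₜ[R] (Coalgebra.comul (R := R) y)) = x ⊗ₜ[R] y := by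
  simp [proj2, Coalgebra.rTensor_counit_comul]

theorem lc_sum (S : Finset (H × H))
    (hS : Coalgebra.comul (R := R) (1 : H) = ∑ p ∈ S, p.1 ⊗ₜ[R] p.2)
    (hlc : LC R H) :
    ∑ p ∈ S, p.1 ⊗ₜ[R] Coalgebra.comul (R := R) p.2 =
      ∑ p ∈ S, ∑ q ∈ S, p.1 ⊗ₜ[R] ((p.2 * q.1) ⊗ₜ[R] q.2) := by
  have h := hlc
  unfold LC comulSq1 d1Left d1Right at h
  rw [hS] at h
  simp only [map_sum, TensorProduct.sum_tmul, TensorProduct.tmul_sum, Finset.sum_mul,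
    Finset.mul_sum, Algebra.TensorProduct.tmul_mul_tmul, TensorProduct.map_tmul,
    LinearMap.id_coe, id_eq, AlgHom.toLinearMap_apply,
    Algebra.TensorProduct.includeLeft_apply, one_mul, mul_one] at h
  rw [h]
  exact Finset.sum_comm

theorem rc_sum (S : Finset (H × H))
    (hS : Coalgebra.comul (R := R) (1 : H) = ∑ p ∈ S, p.1 ⊗ₜ[R] p.2)
    (hrc : RC R H) :
    ∑ p ∈ S, p.1 ⊗ₜ[R] Coalgebra.comul (R := R) p.2 =
      ∑ p ∈ S, ∑ q ∈ S, p.1 ⊗ₜ[R] ((q.1 * p.2) ⊗ₜ[R] q.2) := by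
  have h := hrc
  unfold RC comulSq1 d1Left d1Right at h
  rw [hS] at h
  simp only [map_sum, TensorProduct.sum_tmul, TensorProduct.tmul_sum, Finset.sum_mul,
    Finset.mul_sum, Algebra.TensorProduct.tmul_mul_tmul, TensorProduct.map_tmul,
    LinearMap.id_coe, id_eq, AlgHom.toLinearMap_apply,
    Algebra.TensorProduct.includeLeft_apply, one_mul, mul_one] at h
  rw [h]

end Aux2
section Aux3
variable {R H : Type} [CommRing R] [Ring H] [Algebra R H] [Coalgebra R H]

theorem A_sum (S : Finset (H × H))
    (hS : Coalgebra.comul (R := R) (1 : H) = ∑ p ∈ S, p.1 ⊗ₜ[R] p.2)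
    (hrc : RC R H) :
    ∑ p ∈ S, ∑ q ∈ S, Coalgebra.counit (R := R) (q.1 * p.2) • (p.1 ⊗ₜ[R] q.2) =
      ∑ p ∈ S, p.1 ⊗ₜ[R] p.2 := by
  have h2 := congrArg (proj2 (R := R) (H := H)) (rc_sum S hS hrc)
  simpa [map_sum, proj2_comul, proj2_tmul] using h2.symm

/-- Projection `x ⊗ w ↦ ε(xh) • w`. -/
noncomputable def projL (h : H) : H ⊗[R] (H ⊗[R] H) →ₗ[R] H ⊗[R] H :=
  (TensorProduct.lid R (H ⊗[R] H)).toLinearMap ∘ₗ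
    ((Coalgebra.counit ∘ₗ LinearMap.mulRight R h).rTensor (H ⊗[R] H))

theorem projL_tmul (h x : H) (w : H ⊗[R] H) :
    projL (R := R) h (x ⊗ₜ[R] w) = Coalgebra.counit (R := R) (x * h) • w := by
  simp [projL]

theorem Flc (S : Finset (H × H))
    (hS : Coalgebra.comul (R := R) (1 : H) = ∑ p ∈ S, p.1 ⊗ₜ[R] p.2)
    (hlc : LC R H) (h : H) :
    Coalgebra.comul (R := R) (epsT R H h) =
      ∑ q ∈ S, (epsT R H h * q.1) ⊗ₜ[R] q.2 := by
  have h2 := congrArg (projL (R := R) h) (lc_sum S hS hlc)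
  simp only [map_sum, projL_tmul] at h2
  rw [epsT_rep S hS h, map_sum]
  simp only [map_smul]
  rw [h2, Finset.sum_comm]
  refine Finset.sum_congr rfl fun q _ => ?_
  simp [Finset.sum_mul, TensorProduct.sum_tmul, smul_mul_assoc, TensorProduct.smul_tmul']

theorem Frc (S : Finset (H × H))
    (hS : Coalgebra.comul (R := R) (1 : H) = ∑ p ∈ S, p.1 ⊗ₜ[R] p.2)
    (hrc : RC R H) (h : H) :
    Coalgebra.comul (R := R) (epsT R H h) =
      ∑ q ∈ S, (q.1 * epsT R H h) ⊗ₜ[R] q.2 := by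
  have h2 := congrArg (projL (R := R) h) (rc_sum S hS hrc)
  simp only [map_sum, projL_tmul] at h2
  rw [epsT_rep S hS h, map_sum]
  simp only [map_smul]
  rw [h2, Finset.sum_comm]
  refine Finset.sum_congr rfl fun q _ => ?_
  simp [Finset.mul_sum, TensorProduct.sum_tmul, mul_smul_comm, TensorProduct.smul_tmul']

end Aux3
section Aux4
variable {R H : Type} [CommRing R] [Ring H] [Algebra R H] [Coalgebra R H]

theorem M2z (S : Finset (H × H))
    (hS : Coalgebra.comul (R := R) (1 : H) = ∑ p ∈ S, p.1 ⊗ₜ[R] p.2)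
    (hpre : ComulMul R H) (hrc : RC R H) (h : H) :
    ∑ p ∈ S, p.1 ⊗ₜ[R] (epsT R H h * p.2) =
      ∑ p ∈ S, ∑ q ∈ S,
        Coalgebra.counit (R := R) ((q.1 * epsT R H h) * p.2) • (p.1 ⊗ₜ[R] q.2) := by
  set z := epsT R H h with hz
  have key : ((1 : H) ⊗ₜ[R] Coalgebra.comul (R := R) z) * d1Left R H
      = ((1 : H) ⊗ₜ[R] Coalgebra.comul (R := R) z) * comulSq1 R H := by
    rw [hrc, ← mul_assoc]
    congr 1
    unfold d1Right
    rw [Algebra.TensorProduct.tmul_mul_tmul, mul_one, ← hpre, mul_one]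
  have hRHS : ((1 : H) ⊗ₜ[R] Coalgebra.comul (R := R) z) * comulSq1 R H
      = ∑ p ∈ S, p.1 ⊗ₜ[R] Coalgebra.comul (R := R) (z * p.2) := by
    unfold comulSq1
    rw [hS]
    simp only [map_sum, TensorProduct.map_tmul, LinearMap.id_coe, id_eq, Finset.mul_sum,
      Algebra.TensorProduct.tmul_mul_tmul, one_mul]
    exact Finset.sum_congr rfl fun p _ => by rw [← hpre]
  have hLHS : ((1 : H) ⊗ₜ[R] Coalgebra.comul (R := R) z) * d1Left R H
      = ∑ p ∈ S, ∑ q ∈ S, p.1 ⊗ₜ[R] (((q.1 * z) * p.2) ⊗ₜ[R] q.2) := by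
    unfold d1Left
    rw [hS, Frc S hS hrc h, ← hz]
    simp only [map_sum, TensorProduct.map_tmul, LinearMap.id_coe, id_eq,
      AlgHom.toLinearMap_apply, Algebra.TensorProduct.includeLeft_apply,
      TensorProduct.sum_tmul, TensorProduct.tmul_sum, Finset.mul_sum, Finset.sum_mul,
      Algebra.TensorProduct.tmul_mul_tmul, one_mul, mul_one]
  have key2 := congrArg (proj2 (R := R) (H := H)) (hLHS.symm.trans (key.trans hRHS))
  simp only [map_sum, proj2_tmul, proj2_comul] at key2
  exact key2.symm

theorem M1z (S : Finset (H × H))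
    (hS : Coalgebra.comul (R := R) (1 : H) = ∑ p ∈ S, p.1 ⊗ₜ[R] p.2)
    (hpre : ComulMul R H) (hlc : LC R H) (h : H) :
    ∑ p ∈ S, p.1 ⊗ₜ[R] (p.2 * epsT R H h) =
      ∑ p ∈ S, ∑ q ∈ S,
        Coalgebra.counit (R := R) (p.2 * (epsT R H h * q.1)) • (p.1 ⊗ₜ[R] q.2) := by
  set z := epsT R H h with hz
  have key : d1Left R H * ((1 : H) ⊗ₜ[R] Coalgebra.comul (R := R) z)
      = comulSq1 R H * ((1 : H) ⊗ₜ[R] Coalgebra.comul (R := R) z) := by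
    rw [hlc, mul_assoc]
    congr 1
    unfold d1Right
    rw [Algebra.TensorProduct.tmul_mul_tmul, mul_one, ← hpre, one_mul]
  have hRHS : comulSq1 R H * ((1 : H) ⊗ₜ[R] Coalgebra.comul (R := R) z)
      = ∑ p ∈ S, p.1 ⊗ₜ[R] Coalgebra.comul (R := R) (p.2 * z) := by
    unfold comulSq1
    rw [hS]
    simp only [map_sum, TensorProduct.map_tmul, LinearMap.id_coe, id_eq, Finset.sum_mul,
      Algebra.TensorProduct.tmul_mul_tmul, mul_one]
    exact Finset.sum_congr rfl fun p _ => by rw [← hpre]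
  have hLHS : d1Left R H * ((1 : H) ⊗ₜ[R] Coalgebra.comul (R := R) z)
      = ∑ p ∈ S, ∑ q ∈ S, p.1 ⊗ₜ[R] ((p.2 * (z * q.1)) ⊗ₜ[R] q.2) := by
    unfold d1Left
    rw [hS, Flc S hS hlc h, ← hz]
    simp only [map_sum, TensorProduct.map_tmul, LinearMap.id_coe, id_eq,
      AlgHom.toLinearMap_apply, Algebra.TensorProduct.includeLeft_apply,
      TensorProduct.sum_tmul, TensorProduct.tmul_sum, Finset.mul_sum, Finset.sum_mul,
      Algebra.TensorProduct.tmul_mul_tmul, one_mul, mul_one]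
    exact Finset.sum_comm
  have key2 := congrArg (proj2 (R := R) (H := H)) (hLHS.symm.trans (key.trans hRHS))
  simp only [map_sum, proj2_tmul, proj2_comul] at key2
  exact key2.symm
end Aux4
section Aux5
variable {R H : Type} [CommRing R] [Ring H] [Algebra R H] [Coalgebra R H]

theorem casimir (S : Finset (H × H))
    (hS : Coalgebra.comul (R := R) (1 : H) = ∑ p ∈ S, p.1 ⊗ₜ[R] p.2)
    (hpre : ComulMul R H) (hlm : LM R H) (hrm : RM R H)
    (hlc : LC R H) (hrc : RC R H) (h : H) :
    (epsT R H h ⊗ₜ[R] (1 : H)) * (∑ p ∈ S, epsT R H p.1 ⊗ₜ[R] p.2) =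
      (∑ p ∈ S, epsT R H p.1 ⊗ₜ[R] p.2) * ((1 : H) ⊗ₜ[R] epsT R H h) := by
  set z := epsT R H h with hz
  set Lam : H ⊗[R] H →ₗ[R] H ⊗[R] H :=
    (TensorProduct.comm R H H).toLinearMap ∘ₗ TensorProduct.map (epsTbar R H) LinearMap.id
    with hLam
  set Gam : H ⊗[R] H →ₗ[R] H ⊗[R] H :=
    TensorProduct.map (epsT R H) LinearMap.id with hGam
  have hM2 := M2z S hS hpre hrc h
  have hM1 := M1z S hS hpre hlc h
  rw [← hz] at hM2 hM1
  -- LHS chain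
  have lhs1 : (z ⊗ₜ[R] (1 : H)) * (∑ p ∈ S, epsT R H p.1 ⊗ₜ[R] p.2)
      = Lam (∑ p ∈ S, p.1 ⊗ₜ[R] (z * p.2)) := by
    rw [Finset.mul_sum, map_sum]
    simp only [Algebra.TensorProduct.tmul_mul_tmul, one_mul, hLam, LinearMap.comp_apply,
      TensorProduct.map_tmul, LinearMap.id_coe, id_eq, LinearEquiv.coe_coe,
      TensorProduct.comm_tmul]
    have e1 : ∀ p : H × H, (z * epsT R H p.1) ⊗ₜ[R] p.2
        = ∑ q ∈ S, Coalgebra.counit (R := R) (q.1 * p.1) • ((z * q.2) ⊗ₜ[R] p.2) := by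
      intro p
      rw [epsT_rep S hS p.1, Finset.mul_sum]
      simp [mul_smul_comm, TensorProduct.smul_tmul', TensorProduct.sum_tmul]
    have e2 : ∀ p : H × H, (z * p.2) ⊗ₜ[R] epsTbar R H p.1
        = ∑ q ∈ S, Coalgebra.counit (R := R) (p.1 * q.1) • ((z * p.2) ⊗ₜ[R] q.2) := by
      intro p
      rw [epsTbar_rep S hS p.1]
      simp [TensorProduct.tmul_sum, TensorProduct.tmul_smul]
    rw [Finset.sum_congr rfl fun p _ => e1 p, Finset.sum_congr rfl fun p _ => e2 p]
    exact Finset.sum_comm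
  have lhs2 : Lam (∑ p ∈ S, ∑ q ∈ S,
        Coalgebra.counit (R := R) ((q.1 * z) * p.2) • (p.1 ⊗ₜ[R] q.2))
      = ∑ q ∈ S, ∑ r ∈ S,
          Coalgebra.counit (R := R) ((q.1 * z) * r.1) • (q.2 ⊗ₜ[R] r.2) := by
    rw [map_sum]
    simp only [map_sum, map_smul, hLam, LinearMap.comp_apply, TensorProduct.map_tmul,
      LinearMap.id_coe, id_eq, LinearEquiv.coe_coe, TensorProduct.comm_tmul]
    -- now : Σ_p Σ_q ε((q.1*z)*p.2) • (q.2 ⊗ epsTbar p.1) = ...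
    have e3 : ∀ p q : H × H,
        Coalgebra.counit (R := R) ((q.1 * z) * p.2) • (q.2 ⊗ₜ[R] epsTbar R H p.1)
          = ∑ r ∈ S, (Coalgebra.counit (R := R) ((q.1 * z) * p.2) *
              Coalgebra.counit (R := R) (p.1 * r.1)) • (q.2 ⊗ₜ[R] r.2) := by
      intro p q
      rw [epsTbar_rep S hS p.1]
      simp [TensorProduct.tmul_sum, TensorProduct.tmul_smul, Finset.smul_sum, smul_smul]
    rw [Finset.sum_congr rfl fun p _ => Finset.sum_congr rfl fun q _ => e3 p q]
    rw [Finset.sum_comm]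
    refine Finset.sum_congr rfl fun q _ => ?_
    rw [Finset.sum_comm]
    refine Finset.sum_congr rfl fun r _ => ?_
    rw [← Finset.sum_smul, ← rm1 S hS hrm (q.1 * z) r.1]
  -- RHS chain
  have rhs1 : (∑ p ∈ S, epsT R H p.1 ⊗ₜ[R] p.2) * ((1 : H) ⊗ₜ[R] z)
      = Gam (∑ p ∈ S, p.1 ⊗ₜ[R] (p.2 * z)) := by
    rw [Finset.sum_mul, map_sum]
    simp [hGam, Algebra.TensorProduct.tmul_mul_tmul]
  have rhs2 : Gam (∑ p ∈ S, ∑ q ∈ S,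
        Coalgebra.counit (R := R) (p.2 * (z * q.1)) • (p.1 ⊗ₜ[R] q.2))
      = ∑ q ∈ S, ∑ r ∈ S,
          Coalgebra.counit (R := R) (r.1 * (z * q.1)) • (r.2 ⊗ₜ[R] q.2) := by
    rw [map_sum]
    simp only [map_sum, map_smul, hGam, TensorProduct.map_tmul,
      LinearMap.id_coe, id_eq]
    have e4 : ∀ p q : H × H,
        Coalgebra.counit (R := R) (p.2 * (z * q.1)) • (epsT R H p.1 ⊗ₜ[R] q.2)
          = ∑ r ∈ S, (Coalgebra.counit (R := R) (r.1 * p.1) *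
              Coalgebra.counit (R := R) (p.2 * (z * q.1))) • (r.2 ⊗ₜ[R] q.2) := by
      intro p q
      rw [epsT_rep S hS p.1]
      simp only [TensorProduct.sum_tmul, TensorProduct.smul_tmul', Finset.smul_sum,
        smul_smul]
      exact Finset.sum_congr rfl fun r _ => by rw [mul_comm]
    rw [Finset.sum_congr rfl fun p _ => Finset.sum_congr rfl fun q _ => e4 p q]
    rw [Finset.sum_comm]
    refine Finset.sum_congr rfl fun q _ => ?_
    rw [Finset.sum_comm]
    refine Finset.sum_congr rfl fun r _ => ?_
    rw [← Finset.sum_smul, ← lm1 S hS hlm r.1 (z * q.1)]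
  rw [lhs1, congrArg Lam hM2, lhs2, rhs1, congrArg Gam hM1, rhs2]
  rw [Finset.sum_comm]
  exact Finset.sum_congr rfl fun q _ => Finset.sum_congr rfl fun r _ => by
    rw [mul_assoc]
end Aux5
section Aux6
variable {R H : Type} [CommRing R] [Ring H] [Algebra R H] [Coalgebra R H]

theorem pair_epsT (S : Finset (H × H))
    (hS : Coalgebra.comul (R := R) (1 : H) = ∑ p ∈ S, p.1 ⊗ₜ[R] p.2)
    (hrm : RM R H) (x y : H) :
    Coalgebra.counit (R := R) (x * epsT R H y) = Coalgebra.counit (R := R) (x * y) := by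
  rw [epsT_rep S hS y, Finset.mul_sum, map_sum, rm1 S hS hrm x y]
  simp only [mul_smul_comm, map_smul, smul_eq_mul]
  exact Finset.sum_congr rfl fun p _ => mul_comm _ _

theorem epsT_idem (S : Finset (H × H))
    (hS : Coalgebra.comul (R := R) (1 : H) = ∑ p ∈ S, p.1 ⊗ₜ[R] p.2)
    (hrm : RM R H) (y : H) :
    epsT R H (epsT R H y) = epsT R H y := by
  conv_lhs => rw [epsT_rep S hS (epsT R H y)]
  simp only [pair_epsT S hS hrm]
  exact (epsT_rep S hS y).symm

theorem counit_epsT (S : Finset (H × H))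
    (hS : Coalgebra.comul (R := R) (1 : H) = ∑ p ∈ S, p.1 ⊗ₜ[R] p.2)
    (y : H) :
    Coalgebra.counit (R := R) (epsT R H y) = Coalgebra.counit (R := R) y := by
  rw [epsT_rep S hS y, map_sum]
  simp only [map_smul, smul_eq_mul]
  have h2 := congrArg (fun t => Coalgebra.counit (R := R) (t * y)) (counit_snd_sum S hS)
  simp only [Finset.sum_mul, smul_mul_assoc, map_sum, map_smul, smul_eq_mul, one_mul] at h2
  rw [← h2]
  exact Finset.sum_congr rfl fun p _ => mul_comm _ _

end Aux6



/-- For a weak bialgebra `H` (a prebialgebra satisfying (lm), (rm), (lc)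
and (rc)), `H_t = Im(ε_t)` is a Frobenius separable algebra with separability
idempotent `e_t = ε_t(1₍₁₎) ⊗ 1₍₂₎` and Frobenius functional the restriction of `ε`:
`e_t` lies in `H_t ⊗ H_t`, `(z⊗1)e_t = e_t(1⊗z)` for all `z ∈ H_t`,
`ε(ε_t(1₍₁₎))1₍₂₎ = 1 = ε_t(1₍₁₎)ε(1₍₂₎)` and `ε_t(1₍₁₎)1₍₂₎ = 1`. -/
theorem weak_bialgebra_Ht_frobenius_separable
    (R H : Type) [CommRing R] [Ring H] [Algebra R H] [Coalgebra R H]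
    (hpre : ComulMul R H)
    (hlm : LM R H) (hrm : RM R H) (hlc : LC R H) (hrc : RC R H)
    (et : H ⊗[R] H)
    (het : et = (TensorProduct.map (epsT R H) LinearMap.id)
      (Coalgebra.comul (R := R) (1 : H))) :
    (TensorProduct.map (epsT R H) (epsT R H)) et = et ∧
    (∀ z ∈ Set.range (epsT R H), (z ⊗ₜ[R] (1 : H)) * et = et * ((1 : H) ⊗ₜ[R] z)) ∧
    (TensorProduct.lid R H) ((TensorProduct.map Coalgebra.counit LinearMap.id) et) = 1 ∧
    (TensorProduct.rid R H) ((TensorProduct.map LinearMap.id Coalgebra.counit) et) = 1 ∧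
    (LinearMap.mul' R H) et = 1 := by
  obtain ⟨S, hS⟩ := TensorProduct.exists_finset (Coalgebra.comul (R := R) (1 : H))
  have het' : et = ∑ p ∈ S, epsT R H p.1 ⊗ₜ[R] p.2 := by
    rw [het, hS, map_sum]
    simp
  refine ⟨?_, ?_, ?_, ?_, ?_⟩
  · -- e_t ∈ H_t ⊗ H_t
    rw [het', map_sum]
    simp only [TensorProduct.map_tmul]
    have j1 : ∑ p ∈ S, p.1 ⊗ₜ[R] epsT R H p.2 = ∑ p ∈ S, p.1 ⊗ₜ[R] p.2 := by
      rw [← A_sum S hS hrc]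
      refine Finset.sum_congr rfl fun p _ => ?_
      rw [epsT_rep S hS p.2]
      simp [TensorProduct.tmul_sum, TensorProduct.tmul_smul]
    have j2 := congrArg (TensorProduct.map (epsT R H) LinearMap.id) j1
    simp only [map_sum, TensorProduct.map_tmul, LinearMap.id_coe, id_eq] at j2
    have j3 : ∑ p ∈ S, epsT R H (epsT R H p.1) ⊗ₜ[R] epsT R H p.2
        = ∑ p ∈ S, epsT R H p.1 ⊗ₜ[R] epsT R H p.2 :=
      Finset.sum_congr rfl fun p _ => by rw [epsT_idem S hS hrm]
    rw [j3]
    exact j2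
  · -- Casimir
    rintro z ⟨h, rfl⟩
    rw [het']
    exact casimir S hS hpre hlm hrm hlc hrc h
  · -- counit ⊗ id
    rw [het', map_sum]
    simp only [TensorProduct.map_tmul, LinearMap.id_coe, id_eq, map_sum,
      LinearEquiv.coe_coe, TensorProduct.lid_tmul]
    have j : ∑ p ∈ S, Coalgebra.counit (R := R) (epsT R H p.1) • p.2
        = ∑ p ∈ S, Coalgebra.counit (R := R) p.1 • p.2 :=
      Finset.sum_congr rfl fun p _ => by rw [counit_epsT S hS]
    rw [j]
    exact counit_fst_sum S hS
  · -- id ⊗ counit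
    rw [het', map_sum]
    simp only [TensorProduct.map_tmul, LinearMap.id_coe, id_eq, map_sum,
      LinearEquiv.coe_coe, TensorProduct.rid_tmul]
    have h2 := congrArg (epsT R H) (counit_snd_sum S hS)
    rw [map_sum] at h2
    simp only [map_smul] at h2
    rw [h2, epsT_rep S hS 1]
    simp only [mul_one]
    exact counit_fst_sum S hS
  · -- multiplication
    rw [het', map_sum]
    simp only [LinearMap.mul'_apply]
    have hG : ∑ p ∈ S, ∑ q ∈ S, (p.1 * q.1) ⊗ₜ[R] (p.2 * q.2) = ∑ p ∈ S, p.1 ⊗ₜ[R] p.2 := by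
      have h2 := hpre 1 1
      rw [one_mul, hS] at h2
      conv_rhs => rw [h2]
      simp only [Finset.sum_mul, Finset.mul_sum, Algebra.TensorProduct.tmul_mul_tmul]
      exact Finset.sum_comm
    have h3 := congrArg (fun w => (TensorProduct.lid R H)
      ((Coalgebra.counit (R := R)).rTensor H w)) hG
    simp only [map_sum, LinearMap.rTensor_tmul, LinearEquiv.coe_coe,
      TensorProduct.lid_tmul] at h3
    have j : ∑ p ∈ S, epsT R H p.1 * p.2
        = ∑ p ∈ S, ∑ q ∈ S, Coalgebra.counit (R := R) (q.1 * p.1) • (q.2 * p.2) :=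
      Finset.sum_congr rfl fun p _ => by
        rw [epsT_rep S hS p.1, Finset.sum_mul]
        simp only [smul_mul_assoc]
    rw [j, Finset.sum_comm, h3]
    exact counit_fst_sum S hS
end
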